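/- arXiv:2507.11701 — 7 statements merged into one kernel-verified Lean document; each statement's English description precedes it below -/
import Mathlib

section
/- The number of parking functions on n cars (functions π:[n]→[n] such that the i-th smallest value of π is at most i for all i) is (n+1)^(n-1). -/
/-- A parking function on `n` cars: `π : [n] → [n]` (cars indexed by `Fin n`,
spots `1,…,n`) such that at least `i` cars prefer one of the first `i` spots. -/
def IsPF (n : ℕ) (π : Fin n → ℕ) : Prop :=
  (∀ j, π j ∈ Finset.Icc 1 n) ∧
  ∀ i ∈ Finset.Icc 1 n, i ≤ (Finset.univ.filter (fun j => π j ≤ i)).card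


section PF
variable {n : ℕ}

def IsPark (n : ℕ) (f : Fin n → ZMod (n+1)) : Prop :=
  ∀ t ≤ n, t ≤ (Finset.univ.filter (fun j => (f j).val < t)).card

def wg (g : Fin n → ZMod (n+1)) (s : ℕ) : ℕ :=
  (Finset.univ.filter (fun j => g j = (s : ZMod (n+1)))).card

def Bg (g : Fin n → ZMod (n+1)) (k : ℕ) : ℤ :=
  ∑ s ∈ Finset.range k, ((wg g s : ℤ) - 1)

lemma zmod_eq_iff_val {s : ℕ} (hs : s < n + 1) (a : ZMod (n+1)) :
    a = (s : ZMod (n+1)) ↔ a.val = s := by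
  constructor
  · rintro rfl; exact ZMod.val_cast_of_lt hs
  · intro h; apply ZMod.val_injective; rw [h, ZMod.val_cast_of_lt hs]

lemma wg_periodic (g : Fin n → ZMod (n+1)) (s : ℕ) : wg g (s + (n+1)) = wg g s := by
  unfold wg
  congr 1
  apply Finset.filter_congr
  intro j _
  have : ((s + (n+1) : ℕ) : ZMod (n+1)) = (s : ZMod (n+1)) := by
    push_cast; simp
  rw [this]

lemma sum_wg (g : Fin n → ZMod (n+1)) : ∑ s ∈ Finset.range (n+1), wg g s = n := by
  have h := Finset.card_eq_sum_card_fiberwise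
      (f := fun j : Fin n => (g j).val) (s := Finset.univ) (t := Finset.range (n+1))
      (fun j _ => Finset.mem_range.2 (ZMod.val_lt (g j)))
  simp only [Finset.card_univ, Fintype.card_fin] at h
  calc ∑ s ∈ Finset.range (n+1), wg g s
      = ∑ s ∈ Finset.range (n+1),
          (Finset.univ.filter (fun j => (g j).val = s)).card := by
        apply Finset.sum_congr rfl
        intro s hs
        unfold wg
        congr 1
        apply Finset.filter_congr
        intro j _
        exact zmod_eq_iff_val (Finset.mem_range.1 hs) (g j)
    _ = n := h.symm

lemma sum_Ico_wg (g : Fin n → ZMod (n+1)) (k : ℕ) :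
    ∑ s ∈ Finset.Ico k (k + (n+1)), wg g s = n := by
  induction k with
  | zero => rw [Nat.zero_add, ← Finset.range_eq_Ico]; exact sum_wg g
  | succ k ih =>
    have h1 : ∑ s ∈ Finset.Ico k (k + (n+1) + 1), wg g s
        = (∑ s ∈ Finset.Ico k (k + (n+1)), wg g s) + wg g (k + (n+1)) :=
      Finset.sum_Ico_succ_top (by omega) _
    have h2 : ∑ s ∈ Finset.Ico k (k + (n+1) + 1), wg g s
        = wg g k + ∑ s ∈ Finset.Ico (k+1) (k + (n+1) + 1), wg g s :=
      Finset.sum_eq_sum_Ico_succ_bot (by omega) _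
    have h3 : k + 1 + (n+1) = k + (n+1) + 1 := by omega
    rw [h3]
    have e := h2.symm.trans h1
    rw [wg_periodic, ih] at e
    rw [Nat.add_comm n (wg g k)] at e
    exact Nat.add_left_cancel e

lemma Bg_period (g : Fin n → ZMod (n+1)) (k : ℕ) : Bg g (k + (n+1)) = Bg g k - 1 := by
  unfold Bg
  rw [Finset.range_eq_Ico,
    ← Finset.sum_Ico_consecutive _ (Nat.zero_le k) (by omega : k ≤ k + (n+1))]
  have h1 : ∑ s ∈ Finset.Ico k (k + (n+1)), ((wg g s : ℤ) - 1)
      = (∑ s ∈ Finset.Ico k (k + (n+1)), (wg g s : ℤ)) - (n+1) := by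
    rw [Finset.sum_sub_distrib]
    simp [Nat.add_sub_cancel_left]
  have h4 : (∑ s ∈ Finset.Ico k (k + (n+1)), (wg g s : ℤ)) = (n : ℤ) := by
    exact_mod_cast sum_Ico_wg g k
  rw [h1, h4]
  rw [← Finset.range_eq_Ico]
  ring
lemma card_lt_eq (g : Fin n → ZMod (n+1)) (p t : ℕ) (ht : t ≤ n + 1) :
    ((Finset.univ.filter (fun j => (g j - (p : ZMod (n+1))).val < t)).card : ℤ)
      = Bg g (p + t) - Bg g p + t := by
  have hA : (Finset.univ.filter (fun j => (g j - (p : ZMod (n+1))).val < t)).card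
      = ∑ s ∈ Finset.range t, wg g (p + s) := by
    have h := Finset.card_eq_sum_card_fiberwise
        (f := fun j : Fin n => (g j - (p : ZMod (n+1))).val)
        (s := Finset.univ.filter (fun j => (g j - (p : ZMod (n+1))).val < t))
        (t := Finset.range t)
        (fun j hj => Finset.mem_range.2 (Finset.mem_filter.1 hj).2)
    rw [h]
    apply Finset.sum_congr rfl
    intro s hs
    have hst := Finset.mem_range.1 hs
    rw [Finset.filter_filter]
    have : ∀ j : Fin n,
        ((g j - (p : ZMod (n+1))).val < t ∧ (g j - (p : ZMod (n+1))).val = s)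
          ↔ g j = ((p + s : ℕ) : ZMod (n+1)) := by
      intro j
      constructor
      · rintro ⟨-, h2⟩
        have : g j - (p : ZMod (n+1)) = (s : ZMod (n+1)) :=
          (zmod_eq_iff_val (by omega) _).2 h2
        have := sub_eq_iff_eq_add.1 this
        rw [this]; push_cast; ring
      · intro h
        have : g j - (p : ZMod (n+1)) = (s : ZMod (n+1)) := by
          rw [h]; push_cast; ring
        rw [this, ZMod.val_cast_of_lt (by omega)]
        exact ⟨hst, rfl⟩
    unfold wg
    congr 1
    apply Finset.filter_congr
    intro j _
    exact this j
  rw [hA]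
  have hB : Bg g (p + t) - Bg g p
      = ∑ s ∈ Finset.range t, ((wg g (p + s) : ℤ) - 1) := by
    unfold Bg
    rw [Finset.range_eq_Ico,
      ← Finset.sum_Ico_consecutive _ (Nat.zero_le p) (by omega : p ≤ p + t),
      ← Finset.range_eq_Ico]
    rw [Finset.sum_Ico_eq_sum_range]
    simp [Nat.add_sub_cancel_left]
  rw [hB, Finset.sum_sub_distrib]
  push_cast
  simp

lemma isPark_shift_iff (g : Fin n → ZMod (n+1)) (p : ℕ) :
    IsPark n (fun j => g j - (p : ZMod (n+1))) ↔ ∀ t ≤ n, Bg g p ≤ Bg g (p + t) := by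
  unfold IsPark
  constructor
  · intro h t ht
    have h1 := h t ht
    have h2 := card_lt_eq g p t (by omega)
    have h3 : (t : ℤ) ≤ ((Finset.univ.filter
        (fun j => (g j - (p : ZMod (n+1))).val < t)).card : ℤ) := by exact_mod_cast h1
    omega
  · intro h t ht
    have h1 := h t ht
    have h2 := card_lt_eq g p t (by omega)
    have h3 : (t : ℤ) ≤ ((Finset.univ.filter
        (fun j => (g j - (p : ZMod (n+1))).val < t)).card : ℤ) := by omega
    exact_mod_cast h3

def Good (g : Fin n → ZMod (n+1)) (p : ℕ) : Prop :=
  p ≤ n ∧ (∀ j ≤ n, Bg g p ≤ Bg g j) ∧ ∀ j < p, Bg g p < Bg g j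

lemma good_iff (g : Fin n → ZMod (n+1)) (p : ℕ) :
    Good g p ↔ (p ≤ n ∧ ∀ t ≤ n, Bg g p ≤ Bg g (p + t)) := by
  constructor
  · rintro ⟨hp, hmin, hstrict⟩
    refine ⟨hp, fun t ht => ?_⟩
    by_cases hc : p + t ≤ n
    · exact hmin _ hc
    · have hq : p + t = (p + t - (n+1)) + (n+1) := by omega
      rw [hq, Bg_period]
      have := hstrict (p + t - (n+1)) (by omega)
      omega
  · rintro ⟨hp, h⟩
    have key : ∀ j < p, Bg g p < Bg g j := by
      intro j hj
      have ht : j + (n+1) - p ≤ n := by omega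
      have := h _ ht
      have hq : p + (j + (n+1) - p) = j + (n+1) := by omega
      rw [hq, Bg_period] at this
      omega
    refine ⟨hp, fun j hj => ?_, key⟩
    by_cases hc : p ≤ j
    · have := h (j - p) (by omega)
      have hq : p + (j - p) = j := by omega
      rwa [hq] at this
    · exact le_of_lt (key j (by omega))

lemma existsUnique_good (g : Fin n → ZMod (n+1)) : ∃! p, Good g p := by
  have hex : ∃ p, p ≤ n ∧ ∀ j ≤ n, Bg g p ≤ Bg g j := by
    obtain ⟨p, hp, hmin⟩ := Finset.exists_min_image (Finset.range (n+1)) (Bg g)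
      ⟨0, Finset.mem_range.2 (by omega)⟩
    have hp' := Finset.mem_range.1 hp
    exact ⟨p, by omega, fun j hj => hmin j (Finset.mem_range.2 (by omega))⟩
  classical
  set p := Nat.find hex with hpdef
  have hspec := Nat.find_spec hex
  have hp1 := hspec.1
  have goodp : Good g p := by
    refine ⟨hspec.1, hspec.2, fun j hj => ?_⟩
    by_contra hcon
    push_neg at hcon
    have hle : Bg g p ≤ Bg g j := hspec.2 j (by omega)
    have heq : Bg g j = Bg g p := le_antisymm hcon hle
    have : j ≤ n ∧ ∀ i ≤ n, Bg g j ≤ Bg g i :=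
      ⟨by omega, fun i hi => heq ▸ hspec.2 i hi⟩
    exact Nat.find_min hex hj this
  refine ⟨p, goodp, fun q hq => ?_⟩
  rcases lt_trichotomy q p with h | h | h
  · have h1 := goodp.2.2 q h
    have h2 := hq.2.1 p hspec.1
    omega
  · exact h
  · have h1 := hq.2.2 p h
    have h2 := goodp.2.1 q hq.1
    omega
lemma isPark_shift_of_good (g : Fin n → ZMod (n+1)) (p : ℕ) (h : Good g p) :
    IsPark n (fun j => g j - (p : ZMod (n+1))) :=
  (isPark_shift_iff g p).2 ((good_iff g p).1 h).2

lemma existsUnique_shift (g : Fin n → ZMod (n+1)) :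
    ∃! c : ZMod (n+1), IsPark n (fun j => g j + c) := by
  obtain ⟨p, hp, hpuniq⟩ := existsUnique_good g
  refine ⟨-(p : ZMod (n+1)), ?_, ?_⟩
  · show IsPark n fun j => g j + -(p : ZMod (n+1))
    have : (fun j => g j + -(p : ZMod (n+1))) = fun j => g j - (p : ZMod (n+1)) := by
      funext j; ring
    rw [this]
    exact isPark_shift_of_good g p hp
  · intro c hc
    set q := (-c).val with hqdef
    have hcast : ((q : ℕ) : ZMod (n+1)) = -c := by
      rw [hqdef, ZMod.natCast_val, ZMod.cast_id]
    have heq : (fun j => g j + c) = fun j => g j - (q : ZMod (n+1)) := by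
      funext j; rw [hcast]; ring
    rw [heq] at hc
    have hgoodq : Good g q := by
      rw [good_iff]
      have hql : q < n + 1 := ZMod.val_lt _
      exact ⟨by omega, ((isPark_shift_iff g q).1 hc)⟩
    have := hpuniq q hgoodq
    rw [← neg_neg c, ← hcast, this]

instance instDecIsPark (n : ℕ) : DecidablePred (IsPark n) := fun f => by
  unfold IsPark; infer_instance

lemma card_park_mul : (Finset.univ.filter (fun f : Fin n → ZMod (n+1) => IsPark n f)).card
    * (n + 1) = (n + 1) ^ n := by
  classical
  have hcard : ((Finset.univ.filter (fun f : Fin n → ZMod (n+1) => IsPark n f))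
      ×ˢ (Finset.univ : Finset (ZMod (n+1)))).card
      = (Finset.univ : Finset (Fin n → ZMod (n+1))).card := by
    apply Finset.card_bij (fun fc _ => fun j => fc.1 j + fc.2)
    · intro fc _; exact Finset.mem_univ _
    · rintro ⟨f1, c1⟩ h1 ⟨f2, c2⟩ h2 heq
      have hf1 : IsPark n f1 := (Finset.mem_filter.1 (Finset.mem_product.1 h1).1).2
      have hf2 : IsPark n f2 := (Finset.mem_filter.1 (Finset.mem_product.1 h2).1).2
      set g : Fin n → ZMod (n+1) := fun j => f1 j + c1 with hg
      obtain ⟨c, -, huniq⟩ := existsUnique_shift g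
      have e1 : (fun j => g j + (-c1)) = f1 := by funext j; simp [hg]
      have e2 : (fun j => g j + (-c2)) = f2 := by
        funext j
        have h' : g j = f2 j + c2 := congrFun heq j
        rw [h']; ring
      have hc1 : -c1 = c := huniq (-c1) (by
        show IsPark n fun j => g j + -c1
        rw [e1]; exact hf1)
      have hc2 : -c2 = c := huniq (-c2) (by
        show IsPark n fun j => g j + -c2
        rw [e2]; exact hf2)
      have hcc : c1 = c2 := by
        have := hc1.trans hc2.symm
        exact neg_injective this
      have hff : f1 = f2 := by
        funext j
        have h' : f1 j + c1 = f2 j + c2 := congrFun heq j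
        rw [hcc] at h'
        exact add_right_cancel h'
      simp [hff, hcc]
    · intro g _
      obtain ⟨c, hc, -⟩ := existsUnique_shift g
      refine ⟨⟨fun j => g j + c, -c⟩, ?_, ?_⟩
      · exact Finset.mem_product.2 ⟨Finset.mem_filter.2 ⟨Finset.mem_univ _, hc⟩,
          Finset.mem_univ _⟩
      · funext j; simp
  rw [Finset.card_product, Finset.card_univ, Finset.card_univ] at hcard
  rw [ZMod.card, Fintype.card_fun, Fintype.card_fin, ZMod.card] at hcard
  exact hcard

end PF

section Transfer
variable {n : ℕ}

def Psi (n : ℕ) (π : Fin n → ℕ) : Fin n → ZMod (n+1) :=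
  fun j => ((π j - 1 : ℕ) : ZMod (n+1))

lemma psi_val {π : Fin n → ℕ} (hπ : IsPF n π) (j : Fin n) :
    (Psi n π j).val = π j - 1 := by
  have h := hπ.1 j
  rw [Finset.mem_Icc] at h
  exact ZMod.val_cast_of_lt (by omega)

lemma psi_injOn : Set.InjOn (Psi n) {π | IsPF n π} := by
  intro π1 h1 π2 h2 heq
  funext j
  have e1 := psi_val h1 j
  have e2 := psi_val h2 j
  have : (Psi n π1 j).val = (Psi n π2 j).val := by rw [heq]
  have m1 := (Finset.mem_Icc.1 ((h1 : IsPF n π1).1 j)).1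
  have m2 := (Finset.mem_Icc.1 ((h2 : IsPF n π2).1 j)).1
  omega

lemma psi_image :
    Psi n '' {π | IsPF n π}
      = ↑(Finset.univ.filter (fun f : Fin n → ZMod (n+1) => IsPark n f)) := by
  ext f
  simp only [Set.mem_image, Finset.coe_filter, Set.mem_setOf_eq, Finset.mem_univ, true_and]
  constructor
  · rintro ⟨π, hπ, rfl⟩
    intro t ht
    rcases Nat.eq_zero_or_pos t with rfl | htpos
    · exact Nat.zero_le _
    have hfil : Finset.univ.filter (fun j => (Psi n π j).val < t)
        = Finset.univ.filter (fun j => π j ≤ t) := by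
      apply Finset.filter_congr
      intro j _
      have := psi_val hπ j
      have m := (Finset.mem_Icc.1 (hπ.1 j)).1
      constructor <;> intro h <;> omega
    rw [hfil]
    exact hπ.2 t (Finset.mem_Icc.2 ⟨htpos, ht⟩)
  · intro hf
    have hvals : ∀ j, (f j).val < n := by
      have h := hf n le_rfl
      have hle : (Finset.univ.filter (fun j => (f j).val < n)).card
          ≤ (Finset.univ : Finset (Fin n)).card := Finset.card_le_univ _
      rw [Finset.card_univ, Fintype.card_fin] at hle
      have heq : (Finset.univ.filter (fun j => (f j).val < n)).card
          = (Finset.univ : Finset (Fin n)).card := by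
        rw [Finset.card_univ, Fintype.card_fin]; omega
      have := (Finset.card_eq_iff_eq_univ _).1 (by
        rw [heq, Finset.card_univ])
      intro j
      have hj : j ∈ Finset.univ.filter (fun j => (f j).val < n) := by
        rw [this]; exact Finset.mem_univ _
      exact (Finset.mem_filter.1 hj).2
    refine ⟨fun j => (f j).val + 1, ⟨?_, ?_⟩, ?_⟩
    · intro j
      show (f j).val + 1 ∈ Finset.Icc 1 n
      rw [Finset.mem_Icc]
      have := hvals j
      omega
    · intro i hi
      rw [Finset.mem_Icc] at hi
      have hfil : Finset.univ.filter (fun j => (f j).val + 1 ≤ i)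
          = Finset.univ.filter (fun j => (f j).val < i) := by
        apply Finset.filter_congr
        intro j _
        constructor <;> intro h <;> omega
      rw [hfil]
      exact hf i hi.2
    · funext j
      show (((f j).val + 1 - 1 : ℕ) : ZMod (n+1)) = f j
      rw [Nat.add_sub_cancel, ZMod.natCast_val, ZMod.cast_id]

end Transfer

theorem count_parking_functions (n : ℕ) (hn : 0 < n) :
    {π : Fin n → ℕ | IsPF n π}.ncard = (n + 1) ^ (n - 1) := by
  have h1 : {π : Fin n → ℕ | IsPF n π}.ncard
      = (Psi n '' {π | IsPF n π}).ncard := (Set.ncard_image_of_injOn psi_injOn).symm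
  rw [h1, psi_image, Set.ncard_coe_finset]
  have h2 := card_park_mul (n := n)
  have h3 : (n + 1) ^ n = (n + 1) ^ (n - 1) * (n + 1) := by
    rw [← pow_succ]
    congr 1
    omega
  rw [h3] at h2
  exact Nat.eq_of_mul_eq_mul_right (by omega) h2
end

section
/- There is a bijection between prime parking functions on n cars and ([n]\{2})-restricted parking functions on n cars; in particular their counts are equal. -/
/-- A prime parking function on `n` cars: `#π⁻¹([i]) > i` for all `i ∈ [n-1]`. -/
def IsPPF (n : ℕ) (π : Fin n → ℕ) : Prop :=
  (∀ j, π j ∈ Finset.Icc 1 n) ∧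
  ∀ i ∈ Finset.Icc 1 (n - 1), i < (Finset.univ.filter (fun j => π j ≤ i)).card

/-- shift map: 1 ↦ 1, k ↦ k+1 for k ≥ 2 -/
def gmap (k : ℕ) : ℕ := if k ≤ 1 then k else k + 1

/-- inverse shift: 1 ↦ 1, k ↦ k-1 for k ≥ 3 -/
def hmap (k : ℕ) : ℕ := if k ≤ 2 then 1 else k - 1

lemma hg_id (k : ℕ) (hk : 1 ≤ k) : hmap (gmap k) = k := by
  unfold gmap hmap; split_ifs <;> omega

lemma gh_id (k : ℕ) (hk : 1 ≤ k) (hk2 : k ≠ 2) : gmap (hmap k) = k := by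
  unfold gmap hmap; split_ifs <;> omega

lemma ppf_bound {n : ℕ} (hn2 : 2 ≤ n) {π : Fin n → ℕ} (hπ : IsPPF n π) :
    ∀ j, π j ≤ n - 1 := by
  obtain ⟨hmem, hcnt⟩ := hπ
  intro j
  have h1 := hcnt (n - 1) (by simp [Finset.mem_Icc]; omega)
  have hle : (Finset.univ.filter (fun j => π j ≤ n - 1)).card ≤ n := by
    simpa using Finset.card_filter_le (Finset.univ : Finset (Fin n))
      (fun j => π j ≤ n - 1)
  have hcard : (Finset.univ.filter (fun j => π j ≤ n - 1)).card = n := by omega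
  have huniv : Finset.univ.filter (fun j => π j ≤ n - 1) = Finset.univ :=
    Finset.eq_univ_of_card _ (by simpa using hcard)
  have hj : j ∈ Finset.univ.filter (fun j => π j ≤ n - 1) := by
    rw [huniv]; exact Finset.mem_univ j
  exact (Finset.mem_filter.mp hj).2

lemma forward {n : ℕ} (hn : 0 < n) {π : Fin n → ℕ} (hπ : IsPPF n π) :
    IsPF n (gmap ∘ π) ∧ ∀ j, (gmap ∘ π) j ∈ Finset.Icc 1 n \ {2} := by
  obtain ⟨hmem, hcnt⟩ := hπ
  have hb : ∀ j, 1 ≤ π j ∧ π j ≤ n := fun j => by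
    simpa [Finset.mem_Icc] using hmem j
  rcases eq_or_lt_of_le (show 1 ≤ n from hn) with h1 | h2
  · -- n = 1
    have hn1 : n = 1 := h1.symm
    subst hn1
    have hπ1 : ∀ j, π j = 1 := fun j => by have := hb j; omega
    refine ⟨⟨fun j => by simp [gmap, hπ1 j], ?_⟩, fun j => by simp [gmap, hπ1 j]⟩
    intro i hi
    simp only [Finset.mem_Icc] at hi
    have hi1 : i = 1 := by omega
    subst hi1
    have : Finset.univ.filter (fun j => (gmap ∘ π) j ≤ 1) = Finset.univ := by
      apply Finset.eq_univ_of_forall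
      intro j; simp [gmap, hπ1 j]; exact Subsingleton.elim _ _
    rw [this]; simp
  · -- n ≥ 2
    have hn2 : 2 ≤ n := h2
    have hub : ∀ j, π j ≤ n - 1 := ppf_bound hn2 ⟨hmem, hcnt⟩
    constructor
    · constructor
      · intro j
        have := hb j; have := hub j
        simp only [Function.comp, gmap, Finset.mem_Icc]
        split_ifs <;> omega
      · intro i hi
        simp only [Finset.mem_Icc] at hi
        rcases eq_or_lt_of_le hi.1 with h1' | h2'
        · -- i = 1
          have hi1 : i = 1 := h1'.symm
          subst hi1
          have heq : Finset.univ.filter (fun j => (gmap ∘ π) j ≤ 1) =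
              Finset.univ.filter (fun j => π j ≤ 1) := by
            apply Finset.filter_congr
            intro j _
            have := hb j
            simp only [Function.comp, gmap]
            split_ifs <;> omega
          rw [heq]
          have := hcnt 1 (by simp [Finset.mem_Icc]; omega)
          omega
        · -- i ≥ 2
          have hi2 : 2 ≤ i := h2'
          have heq : Finset.univ.filter (fun j => (gmap ∘ π) j ≤ i) =
              Finset.univ.filter (fun j => π j ≤ i - 1) := by
            apply Finset.filter_congr
            intro j _
            have := hb j
            simp only [Function.comp, gmap]
            split_ifs <;> omega
          rw [heq]
          have := hcnt (i - 1) (by simp [Finset.mem_Icc]; omega)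
          omega
    · intro j
      have := hb j; have := hub j
      simp only [Function.comp, gmap, Finset.mem_sdiff, Finset.mem_Icc,
        Finset.mem_singleton]
      split_ifs <;> omega

lemma backward {n : ℕ} (hn : 0 < n) {σ : Fin n → ℕ}
    (hσ : IsPF n σ ∧ ∀ j, σ j ∈ Finset.Icc 1 n \ {2}) :
    IsPPF n (hmap ∘ σ) := by
  obtain ⟨⟨hmem, hcnt⟩, hres⟩ := hσ
  have hb : ∀ j, 1 ≤ σ j ∧ σ j ≤ n ∧ σ j ≠ 2 := fun j => by
    have := hres j
    simp only [Finset.mem_sdiff, Finset.mem_Icc, Finset.mem_singleton] at this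
    exact ⟨this.1.1, this.1.2, this.2⟩
  constructor
  · intro j
    have := hb j
    simp only [Function.comp, hmap, Finset.mem_Icc]
    split_ifs <;> omega
  · intro i hi
    simp only [Finset.mem_Icc] at hi
    have heq : Finset.univ.filter (fun j => (hmap ∘ σ) j ≤ i) =
        Finset.univ.filter (fun j => σ j ≤ i + 1) := by
      apply Finset.filter_congr
      intro j _
      have := hb j
      simp only [Function.comp, hmap]
      split_ifs <;> omega
    rw [heq]
    have := hcnt (i + 1) (by simp [Finset.mem_Icc]; omega)
    omega

theorem prime_equiv_restricted (n : ℕ) (hn : 0 < n) :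
    Nonempty
      ({π : Fin n → ℕ // IsPPF n π} ≃
        {π : Fin n → ℕ // IsPF n π ∧ ∀ j, π j ∈ Finset.Icc 1 n \ {2}}) ∧
    {π : Fin n → ℕ | IsPPF n π}.ncard =
      {π : Fin n → ℕ | IsPF n π ∧ ∀ j, π j ∈ Finset.Icc 1 n \ {2}}.ncard := by
  have e : {π : Fin n → ℕ // IsPPF n π} ≃
      {π : Fin n → ℕ // IsPF n π ∧ ∀ j, π j ∈ Finset.Icc 1 n \ {2}} :=
    { toFun := fun π => ⟨gmap ∘ π.1, forward hn π.2⟩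
      invFun := fun σ => ⟨hmap ∘ σ.1, backward hn σ.2⟩
      left_inv := by
        intro π
        apply Subtype.ext
        funext j
        have h1 : 1 ≤ π.1 j := by
          have := π.2.1 j; simp [Finset.mem_Icc] at this; exact this.1
        exact hg_id _ h1
      right_inv := by
        intro σ
        apply Subtype.ext
        funext j
        have := σ.2.2 j
        simp only [Finset.mem_sdiff, Finset.mem_Icc, Finset.mem_singleton] at this
        exact gh_id _ this.1.1 this.2 }
  refine ⟨⟨e⟩, ?_⟩
  have h1 : {π : Fin n → ℕ | IsPPF n π}.ncard =
      Nat.card {π : Fin n → ℕ // IsPPF n π} := rfl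
  have h2 : {π : Fin n → ℕ | IsPF n π ∧ ∀ j, π j ∈ Finset.Icc 1 n \ {2}}.ncard =
      Nat.card {π : Fin n → ℕ // IsPF n π ∧ ∀ j, π j ∈ Finset.Icc 1 n \ {2}} := rfl
  rw [h1, h2]
  exact Nat.card_congr e
end

section
/- Let S⊆[n] with 1∈S, and let T = {1} ∪ {i+1 : i∈S, 1<i<n}. Then the map π ↦ f∘π, where f(1)=1 and f(x)=x+1 for x≠1, is a bijection from S-restricted prime parking functions on n cars to T-restricted parking functions on n cars. Hence #PPF_{n|S} = #PF_{n|T}. -/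
theorem restricted_prime_equiv_restricted (n : ℕ) (hn : 0 < n)
    (S : Finset ℕ) (hS : S ⊆ Finset.Icc 1 n) (h1 : 1 ∈ S)
    (T : Finset ℕ)
    (hT : T = insert 1 ((S.filter (fun i => 1 < i ∧ i < n)).image (· + 1)))
    (f : ℕ → ℕ) (hf : ∀ x, f x = if x = 1 then 1 else x + 1) :
    Set.BijOn (fun π => f ∘ π)
      {π : Fin n → ℕ | IsPPF n π ∧ ∀ j, π j ∈ S}
      {π : Fin n → ℕ | IsPF n π ∧ ∀ j, π j ∈ T} ∧
    {π : Fin n → ℕ | IsPPF n π ∧ ∀ j, π j ∈ S}.ncard =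
      {π : Fin n → ℕ | IsPF n π ∧ ∀ j, π j ∈ T}.ncard := by
  have hf1 : f 1 = 1 := by rw [hf]; simp
  have hfle : ∀ x, f x ≤ x + 1 := by
    intro x; rw [hf]; split <;> omega
  have hBij : Set.BijOn (fun π => f ∘ π)
      {π : Fin n → ℕ | IsPPF n π ∧ ∀ j, π j ∈ S}
      {π : Fin n → ℕ | IsPF n π ∧ ∀ j, π j ∈ T} := by
    refine ⟨?_, ?_, ?_⟩
    · -- MapsTo
      rintro π ⟨⟨hbd, hpr⟩, hSv⟩
      -- values of π are ≤ n - 1 when n ≥ 2, and are 1 when n = 1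
      have hub : ∀ j, π j = 1 ∨ (π j < n ∧ 2 ≤ n) := by
        intro j
        rcases Nat.lt_or_ge n 2 with h2 | h2
        · left
          have := hbd j
          simp [Finset.mem_Icc] at this
          omega
        · right
          refine ⟨?_, h2⟩
          have hm : n - 1 ∈ Finset.Icc 1 (n - 1) := by
            simp [Finset.mem_Icc]; omega
          have hcard := hpr (n - 1) hm
          have hle : (Finset.univ.filter (fun j => π j ≤ n - 1)).card ≤ n := by
            calc (Finset.univ.filter (fun j => π j ≤ n - 1)).card
                ≤ (Finset.univ : Finset (Fin n)).card := Finset.card_filter_le _ _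
              _ = n := by simp
          have heq : (Finset.univ.filter (fun j => π j ≤ n - 1)).card =
              (Finset.univ : Finset (Fin n)).card := by simp; omega
          have := Finset.eq_univ_of_card _ heq
          have hj : j ∈ Finset.univ.filter (fun j => π j ≤ n - 1) := by
            rw [this]; exact Finset.mem_univ j
          simp at hj
          omega
      have hval : ∀ j, f (π j) ∈ T := by
        intro j
        rw [hT]
        by_cases h : π j = 1
        · rw [h, hf1]; exact Finset.mem_insert_self _ _
        · rw [hf]; rw [if_neg h]
          apply Finset.mem_insert_of_mem
          apply Finset.mem_image_of_mem
          rw [Finset.mem_filter]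
          have hb := hbd j
          simp [Finset.mem_Icc] at hb
          rcases hub j with h' | h'
          · exact absurd h' h
          · exact ⟨hSv j, by omega, h'.1⟩
      show IsPF n (f ∘ π) ∧ ∀ j, (f ∘ π) j ∈ T
      refine ⟨⟨?_, ?_⟩, hval⟩
      · intro j
        have := hval j
        rw [hT] at this
        simp only [Finset.mem_insert, Finset.mem_image, Finset.mem_filter] at this
        simp only [Function.comp_apply, Finset.mem_Icc]
        rcases this with h | ⟨s, ⟨_, _, hsn⟩, hs⟩ <;> omega
      · intro i hi
        simp [Finset.mem_Icc] at hi
        rcases Nat.lt_or_ge i 2 with h2 | h2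
        · -- i = 1
          have hi1 : i = 1 := by omega
          subst hi1
          have hsub : Finset.univ.filter (fun j => π j ≤ 1) ⊆
              Finset.univ.filter (fun j : Fin n => (f ∘ π) j ≤ 1) := by
            intro j hj
            simp at hj ⊢
            have hb := hbd j
            simp [Finset.mem_Icc] at hb
            have : π j = 1 := by omega
            simp [Function.comp, this, hf1]
          have hpos : 1 ≤ (Finset.univ.filter (fun j => π j ≤ 1)).card := by
            rcases Nat.lt_or_ge n 2 with hn2 | hn2
            · have hn1 : n = 1 := by omega
              have j0 : Fin n := ⟨0, hn⟩
              have hb := hbd j0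
              simp [Finset.mem_Icc, hn1] at hb
              have : j0 ∈ Finset.univ.filter (fun j => π j ≤ 1) := by
                simp; omega
              exact Finset.card_pos.mpr ⟨j0, this⟩ 
            · have hm : (1 : ℕ) ∈ Finset.Icc 1 (n - 1) := by
                simp [Finset.mem_Icc]; omega
              have := hpr 1 hm
              omega
          calc 1 ≤ (Finset.univ.filter (fun j => π j ≤ 1)).card := hpos
            _ ≤ _ := Finset.card_le_card hsub
        · -- i ≥ 2
          have hsub : Finset.univ.filter (fun j => π j ≤ i - 1) ⊆
              Finset.univ.filter (fun j : Fin n => (f ∘ π) j ≤ i) := by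
            intro j hj
            simp at hj ⊢
            have := hfle (π j)
            simp [Function.comp]
            omega
          have hm : i - 1 ∈ Finset.Icc 1 (n - 1) := by
            simp [Finset.mem_Icc]; omega
          have := hpr (i - 1) hm
          have := Finset.card_le_card hsub
          omega
    · -- InjOn
      rintro π ⟨⟨hbd, _⟩, _⟩ π' ⟨⟨hbd', _⟩, _⟩ h
      funext j
      have h1' := congrFun h j
      simp [Function.comp] at h1'
      have ha := hbd j
      have hb := hbd' j
      simp [Finset.mem_Icc] at ha hb
      rw [hf, hf] at h1'
      split_ifs at h1' <;> omega
    · -- SurjOn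
      rintro σ ⟨⟨hbd, hpf⟩, hTv⟩
      have hcase : ∀ j, σ j = 1 ∨ (σ j - 1 ∈ S ∧ 2 < σ j ∧ σ j ≤ n) := by
        intro j
        have := hTv j
        rw [hT] at this
        simp [Finset.mem_insert, Finset.mem_image, Finset.mem_filter] at this
        rcases this with h | ⟨s, ⟨hsS, hs1, hsn⟩, hs⟩
        · left; exact h
        · right
          constructor
          · have : σ j - 1 = s := by omega
            rw [this]; exact hsS
          · omega
      set π : Fin n → ℕ := fun j => if σ j = 1 then 1 else σ j - 1 with hπ
      refine ⟨π, ⟨⟨?_, ?_⟩, ?_⟩, ?_⟩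
      · intro j
        simp only [hπ, Finset.mem_Icc]
        rcases hcase j with h | h
        · simp [h]; omega
        · rw [if_neg (by omega)]; omega
      · intro i hi
        simp [Finset.mem_Icc] at hi
        have hkey : ∀ j : Fin n, π j ≤ i ↔ σ j ≤ i + 1 := by
          intro j
          simp only [hπ]
          rcases hcase j with h | h
          · simp [h]; omega
          · rw [if_neg (by omega)]; omega
        have heq : Finset.univ.filter (fun j => π j ≤ i) =
            Finset.univ.filter (fun j : Fin n => σ j ≤ i + 1) := by
          apply Finset.filter_congr
          intro j _
          simp [hkey j]
        rw [heq]
        have hm : i + 1 ∈ Finset.Icc 1 n := by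
          simp [Finset.mem_Icc]; omega
        have := hpf (i + 1) hm
        omega
      · intro j
        simp only [hπ]
        rcases hcase j with h | h
        · simp [h]; exact h1
        · rw [if_neg (by omega)]; exact h.1
      · funext j
        simp only [Function.comp, hπ]
        rcases hcase j with h | h
        · simp [h, hf1]
        · rw [if_neg (by omega), hf, if_neg (by omega)]
          omega
  refine ⟨hBij, ?_⟩
  rw [← hBij.image_eq]
  exact (Set.ncard_image_of_injOn hBij.injOn).symm
end

section
/- For 1 ≤ s ≤ n, a function ψ:[n]→[s] has defect exactly n−s (i.e., the minimum possible number of cars unable to park when n cars park on s spots) if and only if the corresponding function π:[n]→[n] (composing with the inclusion [s]→[n]) is an [s]-restricted parking function. Hence the minimum-defect preference functions are in bijection with PF_{n|[s]}. -/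
/-- The set of occupied spots after all `n` cars attempt to park on spots `1,…,s`:
each car drives to its preferred spot and parks in the first empty spot at or
after it, exiting unparked if there is none. -/
def finalOcc (n s : ℕ) (ψ : Fin n → ℕ) : Finset ℕ :=
  (List.finRange n).foldl
    (fun occ j =>
      if h : ((Finset.Icc (ψ j) s) \ occ).Nonempty then
        insert (((Finset.Icc (ψ j) s) \ occ).min' h) occ
      else occ)
    ∅

/-- The number of cars that fail to park. -/
def defect (n s : ℕ) (ψ : Fin n → ℕ) : ℕ := n - (finalOcc n s ψ).card

/-- One parking step: a car preferring spot `p` parks in the first empty spot in `[p,s]`. -/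
def pstep (s : ℕ) (occ : Finset ℕ) (p : ℕ) : Finset ℕ :=
  if h : ((Finset.Icc p s) \ occ).Nonempty then
    insert (((Finset.Icc p s) \ occ).min' h) occ
  else occ

lemma subset_pstep (s : ℕ) (occ : Finset ℕ) (p : ℕ) : occ ⊆ pstep s occ p := by
  unfold pstep; split
  · exact Finset.subset_insert _ _
  · exact Finset.Subset.refl _

lemma subset_foldl (s : ℕ) (L : List ℕ) (occ : Finset ℕ) :
    occ ⊆ L.foldl (pstep s) occ := by
  induction L generalizing occ with
  | nil => exact Finset.Subset.refl _
  | cons p L ih => exact (subset_pstep s occ p).trans (ih _)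

lemma foldl_subset (s : ℕ) (L : List ℕ) (hL : ∀ p ∈ L, 1 ≤ p) (occ : Finset ℕ) :
    L.foldl (pstep s) occ ⊆ occ ∪ Finset.Icc 1 s := by
  induction L generalizing occ with
  | nil => simp
  | cons p L ih =>
    have hstep : pstep s occ p ⊆ occ ∪ Finset.Icc 1 s := by
      unfold pstep; split
      · rename_i h
        intro x hx
        rcases Finset.mem_insert.mp hx with hx | hx
        · have := Finset.min'_mem _ h
          rw [hx]
          have hm := Finset.mem_sdiff.mp this
          have := Finset.mem_Icc.mp hm.1
          exact Finset.mem_union_right _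
            (Finset.mem_Icc.mpr ⟨le_trans (hL p (by simp)) this.1, this.2⟩)
        · exact Finset.mem_union_left _ hx
      · exact Finset.subset_union_left
    calc L.foldl (pstep s) (pstep s occ p) ⊆ pstep s occ p ∪ Finset.Icc 1 s :=
          ih (fun q hq => hL q (List.mem_cons_of_mem _ hq)) _
      _ ⊆ occ ∪ Finset.Icc 1 s := Finset.union_subset hstep Finset.subset_union_right

lemma lower_bound (s i : ℕ) (his : i ≤ s) (L : List ℕ) (occ : Finset ℕ)
    (hi : i ∉ L.foldl (pstep s) occ) :
    (occ.filter (· < i)).card + (L.filter (fun p => p ≤ i)).length ≤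
      ((L.foldl (pstep s) occ).filter (· < i)).card := by
  induction L generalizing occ with
  | nil => simp
  | cons p L ih =>
    simp only [List.foldl_cons] at hi ⊢
    by_cases hp : p ≤ i
    · have hio : i ∉ pstep s occ p := fun h => hi (subset_foldl s L _ h)
      have hiocc : i ∉ occ := fun h => hio (subset_pstep s occ p h)
      have hmem : i ∈ Finset.Icc p s \ occ :=
        Finset.mem_sdiff.mpr ⟨Finset.mem_Icc.mpr ⟨hp, his⟩, hiocc⟩
      have hne : ((Finset.Icc p s) \ occ).Nonempty := ⟨i, hmem⟩
      set m := ((Finset.Icc p s) \ occ).min' hne with hm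
      have hms : pstep s occ p = insert m occ := by
        unfold pstep; rw [dif_pos hne]
      have hmlei : m ≤ i := Finset.min'_le _ _ hmem
      have hmnotocc : m ∉ occ := (Finset.mem_sdiff.mp (Finset.min'_mem _ hne)).2
      have hmne : m ≠ i := by
        intro h
        apply hio
        rw [hms, h]; exact Finset.mem_insert_self _ _
      have hmlt : m < i := lt_of_le_of_ne hmlei hmne
      have hcard : ((pstep s occ p).filter (· < i)).card = (occ.filter (· < i)).card + 1 := by
        rw [hms, Finset.filter_insert, if_pos hmlt, Finset.card_insert_of_notMem]
        simp [hmnotocc]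
      have := ih (pstep s occ p) hi
      rw [hcard] at this
      simpa [hp, Nat.add_comm, Nat.add_left_comm, Nat.add_assoc] using this
    · have hsub : (occ.filter (· < i)) ⊆ ((pstep s occ p).filter (· < i)) :=
        Finset.filter_subset_filter _ (subset_pstep s occ p)
      have := ih (pstep s occ p) hi
      have hc := Finset.card_le_card hsub
      simp only [List.filter_cons, decide_eq_true_eq, hp, if_false]
      omega

lemma upper_bound (s i : ℕ) (L : List ℕ) (occ : Finset ℕ) :
    ((L.foldl (pstep s) occ).filter (· ≤ i)).card ≤
      (occ.filter (· ≤ i)).card + (L.filter (fun p => p ≤ i)).length := by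
  induction L generalizing occ with
  | nil => simp
  | cons p L ih =>
    simp only [List.foldl_cons]
    by_cases hp : p ≤ i
    · have hstep : ((pstep s occ p).filter (· ≤ i)).card ≤ (occ.filter (· ≤ i)).card + 1 := by
        unfold pstep; split
        · rw [Finset.filter_insert]
          split
          · exact (Finset.card_insert_le _ _).trans (by omega)
          · omega
        · omega
      have := ih (pstep s occ p)
      simp only [List.filter_cons, decide_eq_true_eq, hp, if_true, List.length_cons]
      omega
    · have hstep : ((pstep s occ p).filter (· ≤ i)) = (occ.filter (· ≤ i)) := by
        unfold pstep; split
        · rename_i h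
          rw [Finset.filter_insert]
          have hm := Finset.mem_sdiff.mp (Finset.min'_mem _ h)
          have := (Finset.mem_Icc.mp hm.1).1
          rw [if_neg (by omega)]
        · rfl
      have := ih (pstep s occ p)
      rw [hstep] at this
      simp only [List.filter_cons, decide_eq_true_eq, hp, if_false]
      omega

lemma count_eq (n i : ℕ) (ψ : Fin n → ℕ) :
    (((List.finRange n).map ψ).filter (fun p => p ≤ i)).length =
      (Finset.univ.filter (fun j => ψ j ≤ i)).card := by
  rw [← List.countP_eq_length_filter, List.countP_map, Fin.univ_def]
  simp only [Finset.filter, Finset.card, Multiset.filter_coe, Multiset.coe_card,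
    ← List.countP_eq_length_filter]
  rfl

lemma finalOcc_eq (n s : ℕ) (ψ : Fin n → ℕ) :
    finalOcc n s ψ = ((List.finRange n).map ψ).foldl (pstep s) ∅ := by
  rw [List.foldl_map]; rfl

theorem min_defect_iff_restricted (n s : ℕ) (h1 : 1 ≤ s) (h2 : s ≤ n)
    (ψ : Fin n → ℕ) (hψ : ∀ j, ψ j ∈ Finset.Icc 1 s) :
    defect n s ψ = n - s ↔
      ∀ i ∈ Finset.Icc 1 n, i ≤ (Finset.univ.filter (fun j => ψ j ≤ i)).card := by
  set L := (List.finRange n).map ψ with hLdef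
  have hL1 : ∀ p ∈ L, 1 ≤ p := by
    intro p hp
    rcases List.mem_map.mp hp with ⟨j, _, rfl⟩
    exact (Finset.mem_Icc.mp (hψ j)).1
  have hEq : finalOcc n s ψ = L.foldl (pstep s) ∅ := finalOcc_eq n s ψ
  have hsub : finalOcc n s ψ ⊆ Finset.Icc 1 s := by
    rw [hEq]
    have := foldl_subset s L hL1 ∅
    simpa using this
  have hcard_le : (finalOcc n s ψ).card ≤ s := by
    have := Finset.card_le_card hsub
    simpa using this
  constructor
  · intro hd i hi
    obtain ⟨hi1, hin⟩ := Finset.mem_Icc.mp hi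
    have hcard : (finalOcc n s ψ).card = s := by
      unfold defect at hd; omega
    by_cases his : i ≤ s
    · have hEqset : finalOcc n s ψ = Finset.Icc 1 s :=
        Finset.eq_of_subset_of_card_le hsub (by simp [hcard])
      have hub := upper_bound s i L ∅
      rw [← hEq, count_eq n i ψ] at hub
      simp only [Finset.filter_empty, Finset.card_empty, Nat.zero_add] at hub
      have hIccsub : Finset.Icc 1 i ⊆ (finalOcc n s ψ).filter (· ≤ i) := by
        intro x hx
        obtain ⟨hx1, hx2⟩ := Finset.mem_Icc.mp hx
        refine Finset.mem_filter.mpr ⟨?_, hx2⟩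
        rw [hEqset]
        exact Finset.mem_Icc.mpr ⟨hx1, le_trans hx2 his⟩
      have := Finset.card_le_card hIccsub
      simp only [Nat.card_Icc] at this
      omega
    · have hall : Finset.univ.filter (fun j => ψ j ≤ i) = Finset.univ := by
        apply Finset.filter_true_of_mem
        intro j _
        exact le_trans (Finset.mem_Icc.mp (hψ j)).2 (by omega)
      rw [hall, Finset.card_univ, Fintype.card_fin]
      exact hin
  · intro H
    have hcard : (finalOcc n s ψ).card = s := by
      refine le_antisymm hcard_le ?_
      have hIccsub : Finset.Icc 1 s ⊆ finalOcc n s ψ := by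
        intro i hi'
        by_contra hnot
        obtain ⟨hi1, his⟩ := Finset.mem_Icc.mp hi'
        rw [hEq] at hnot
        have hlb := lower_bound s i his L ∅ hnot
        rw [← hEq, count_eq n i ψ] at hlb
        simp only [Finset.filter_empty, Finset.card_empty, Nat.zero_add] at hlb
        have hflt : (finalOcc n s ψ).filter (· < i) ⊆ Finset.Icc 1 (i - 1) := by
          intro x hx
          obtain ⟨hx1, hx2⟩ := Finset.mem_filter.mp hx
          have := Finset.mem_Icc.mp (hsub hx1)
          exact Finset.mem_Icc.mpr ⟨this.1, by omega⟩
        have hle := Finset.card_le_card hflt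
        simp only [Nat.card_Icc] at hle
        have hH := H i (Finset.mem_Icc.mpr ⟨hi1, le_trans his h2⟩)
        omega
      have := Finset.card_le_card hIccsub
      simpa using this
    unfold defect
    omega
end

section
/- For 1 ≤ s ≤ n, the number of [s]-restricted parking functions on n cars equals s^n − Σ_{i=0}^{s−1} C(n,i)·(i+1)^{i−1}·(s−i−1)^{n−i}. -/
/-- An `[s]`-restricted parking function on `n` cars. -/
def IsRPF (n s : ℕ) (π : Fin n → ℕ) : Prop :=
  (∀ j, π j ∈ Finset.Icc 1 s) ∧
  ∀ i ∈ Finset.Icc 1 n, i ≤ (Finset.univ.filter (fun j => π j ≤ i)).card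

open Polynomial Finset

lemma findiff_zero (m : ℕ) (p : Polynomial ℤ) (hp : p.degree < m) :
    ∑ j ∈ range (m + 1), (-1 : ℤ) ^ j * (m.choose j : ℤ) * p.eval (j : ℤ) = 0 := by
  induction m generalizing p with
  | zero =>
    have : p = 0 := by
      rw [← degree_eq_bot]
      exact Nat.WithBot.lt_zero_iff.mp (by exact_mod_cast hp)
    simp [this]
  | succ m ih =>
    have key : ∑ j ∈ range (m + 2), (-1 : ℤ) ^ j * ((m+1).choose j : ℤ) * p.eval (j : ℤ)
        = (∑ j ∈ range (m + 1), (-1 : ℤ) ^ j * (m.choose j : ℤ) * p.eval (j : ℤ))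
          - ∑ j ∈ range (m + 1), (-1 : ℤ) ^ j * (m.choose j : ℤ) * p.eval ((j : ℤ) + 1) := by
      rw [Finset.sum_range_succ' (fun j => (-1 : ℤ) ^ j * ((m+1).choose j : ℤ) * p.eval (j : ℤ))]
      have e1 : ∀ j ∈ range (m+1), (-1 : ℤ) ^ (j+1) * ((m+1).choose (j+1) : ℤ) * p.eval ((j+1 : ℕ) : ℤ)
          = -((-1 : ℤ) ^ j * (m.choose j : ℤ) * p.eval ((j : ℤ)+1))
            + (-1 : ℤ) ^ (j+1) * ((m).choose (j+1) : ℤ) * p.eval (((j+1 : ℕ)) : ℤ) := by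
        intro j _
        rw [Nat.choose_succ_succ]
        push_cast
        ring
      rw [Finset.sum_congr rfl e1, Finset.sum_add_distrib, Finset.sum_neg_distrib]
      have e2 : (∑ j ∈ range (m+1), (-1:ℤ)^(j+1) * ((m).choose (j+1) : ℤ) * p.eval (((j+1:ℕ)):ℤ))
            + (-1:ℤ)^0 * ((m+1).choose 0 : ℤ) * p.eval ((0:ℕ):ℤ)
          = ∑ j ∈ range (m + 1), (-1 : ℤ) ^ j * (m.choose j : ℤ) * p.eval (j : ℤ) := by
        rw [Finset.sum_range_succ' (fun j => (-1 : ℤ) ^ j * ((m).choose j : ℤ) * p.eval (j : ℤ)),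
          Finset.sum_range_succ]
        simp [Nat.choose_succ_self]
      push_cast at e2 ⊢
      linarith [e2]
    rw [key]
    rcases eq_or_ne p 0 with rfl | hp0
    · simp
    · set q : Polynomial ℤ := p.comp (X + 1) - p with hq
      have hnd1 : (X + 1 : Polynomial ℤ).natDegree = 1 := by
        rw [← C_1]; exact natDegree_X_add_C 1
      have hlc1 : (X + 1 : Polynomial ℤ).leadingCoeff = 1 := by
        rw [← C_1]; exact Monic.leadingCoeff (monic_X_add_C 1)
      have hc0 : p.comp (X + 1) ≠ 0 := by
        intro h
        have := leadingCoeff_comp (by rw [hnd1]; norm_num : (X + 1 : Polynomial ℤ).natDegree ≠ 0) (p := p)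
        rw [h] at this
        simp only [leadingCoeff_zero] at this
        rw [hlc1, one_pow, mul_one] at this
        exact hp0 (leadingCoeff_eq_zero.mp this.symm)
      have hdeq : (p.comp (X + 1)).degree = p.degree := by
        rw [degree_eq_natDegree hc0, degree_eq_natDegree hp0, natDegree_comp, hnd1, mul_one]
      have hdq : q.degree < p.degree := by
        rw [← hdeq]
        apply degree_sub_lt hdeq hc0
        rw [leadingCoeff_comp (by rw [hnd1]; norm_num : (X + 1 : Polynomial ℤ).natDegree ≠ 0)]
        rw [hlc1, one_pow, mul_one]
      have hq' : q.degree < (m : WithBot ℕ) := by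
        refine lt_of_lt_of_le hdq ?_
        have : p.degree < ((m+1 : ℕ) : WithBot ℕ) := hp
        exact Order.le_of_lt_succ (by exact_mod_cast this)
      have hsum := ih q hq'
      have heval : ∀ j : ℕ, q.eval (j : ℤ) = p.eval ((j : ℤ) + 1) - p.eval (j : ℤ) := by
        intro j; simp [hq, eval_comp]
      rw [Finset.sum_congr rfl (fun j _ => by rw [heval j])] at hsum
      rw [Finset.sum_congr rfl (fun j _ => (by ring :
        (-1:ℤ)^j * (m.choose j : ℤ) * (p.eval ((j:ℤ)+1) - p.eval (j:ℤ))
          = (-1:ℤ)^j * (m.choose j:ℤ) * p.eval ((j:ℤ)+1) - (-1:ℤ)^j * (m.choose j:ℤ) * p.eval (j:ℤ)))] at hsum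
      rw [Finset.sum_sub_distrib] at hsum
      linarith

lemma abel_poly (n : ℕ) :
    (∑ j ∈ range (n+1), C ((n.choose j : ℤ) * ((j : ℤ)+1)^(j-1)) * (X - C ((j : ℤ)+1))^(n-j)
      : Polynomial ℤ) = X ^ n := by
  induction n with
  | zero => simp
  | succ n ih =>
    set S : Polynomial ℤ :=
      ∑ j ∈ range (n+1+1), C (((n+1).choose j : ℤ) * ((j : ℤ)+1)^(j-1)) * (X - C ((j : ℤ)+1))^(n+1-j)
      with hS
    have hder : derivative (S - X ^ (n+1)) = 0 := by
      rw [map_sub, hS, derivative_sum]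
      have hterm : ∀ j ∈ range (n+1+1),
          derivative (C (((n+1).choose j : ℤ) * ((j : ℤ)+1)^(j-1)) * (X - C ((j : ℤ)+1))^(n+1-j))
          = C ((((n+1)-j : ℕ) : ℤ) * (((n+1).choose j : ℤ) * ((j : ℤ)+1)^(j-1)))
              * (X - C ((j : ℤ)+1))^(n-j) := by
        intro j hj
        rw [derivative_C_mul, derivative_pow]
        have : (X - C ((j : ℤ)+1)).derivative = 1 := by
          rw [derivative_sub, derivative_X, derivative_C, sub_zero]
        rw [this, mul_one]
        have : n + 1 - j - 1 = n - j := by omega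
        rw [this]
        simp only [C_mul]
        ring
      rw [Finset.sum_congr rfl hterm]
      rw [Finset.sum_range_succ]
      have hlast : ∀ z w : Polynomial ℤ, C ((((n+1)-(n+1) : ℕ) : ℤ)) * z * w = 0 := by
        intro z w; simp
      rw [Nat.sub_self]
      simp only [Nat.cast_zero, map_zero, zero_mul, add_zero]
      have hcoef : ∀ j ∈ range (n+1),
          C ((((n+1)-j : ℕ) : ℤ) * (((n+1).choose j : ℤ) * ((j : ℤ)+1)^(j-1)))
            * (X - C ((j : ℤ)+1))^(n-j)
          = C (((n:ℤ)+1)) * (C ((n.choose j : ℤ) * ((j : ℤ)+1)^(j-1)) * (X - C ((j : ℤ)+1))^(n-j)) := by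
        intro j hj
        have h1 : (n.choose j) * (n + 1) = ((n+1).choose j) * (n + 1 - j) := Nat.choose_mul_succ_eq n j
        have h2 : ((n.choose j : ℤ)) * ((n:ℤ) + 1) = (((n+1).choose j : ℤ)) * (((n+1-j : ℕ) : ℤ)) := by
          exact_mod_cast congrArg (Nat.cast : ℕ → ℤ) h1
        have key : (((n+1)-j : ℕ) : ℤ) * (((n+1).choose j : ℤ) * ((j:ℤ)+1)^(j-1))
            = ((n:ℤ)+1) * ((n.choose j : ℤ) * ((j:ℤ)+1)^(j-1)) := by
          linear_combination (-(((j:ℤ)+1)^(j-1))) * h2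
        rw [← mul_assoc (C ((n:ℤ)+1)), ← C_mul, key]
      rw [Finset.sum_congr rfl hcoef, ← Finset.mul_sum, ih, derivative_X_pow]
      push_cast
      ring
    have hq : S - X ^ (n+1) = C ((S - X ^ (n+1)).coeff 0) :=
      eq_C_of_natDegree_eq_zero (natDegree_eq_zero_of_derivative_eq_zero hder)
    have heval0 : (S - X ^ (n+1)).eval 0 = 0 := by
      have hfd := findiff_zero (n+1) ((X + 1) ^ n) (by
        have h1 : ((X + 1 : Polynomial ℤ)).degree = 1 := by
          rw [← C_1]; exact degree_X_add_C (1:ℤ)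
        have h2 : ((X + 1 : Polynomial ℤ) ^ n).degree = (n : WithBot ℕ) := by
          rw [degree_pow, h1, nsmul_eq_mul, mul_one]
        rw [h2]
        exact_mod_cast Nat.lt_succ_self n)
      have hev : ∀ j ∈ range (n+1+1),
          (((n+1).choose j : ℤ) * ((j : ℤ)+1)^(j-1)) * ((0 : ℤ) - ((j : ℤ)+1))^(n+1-j)
          = (-1:ℤ)^(n+1) * ((-1:ℤ)^j * (((n+1).choose j : ℤ)) * (((X:Polynomial ℤ) + 1)^n).eval (j:ℤ)) := by
        intro j hj
        simp only [Finset.mem_range] at hj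
        have e1 : ((0 : ℤ) - ((j : ℤ)+1))^(n+1-j) = (-1:ℤ)^(n+1-j) * ((j:ℤ)+1)^(n+1-j) := by
          rw [zero_sub, neg_pow]
        have e2 : ((j : ℤ)+1)^(j-1) * ((j:ℤ)+1)^(n+1-j) = ((j:ℤ)+1)^n := by
          rcases Nat.eq_zero_or_pos j with rfl | hjpos
          · norm_num
          · rw [← pow_add]; congr 1; omega
        have e3 : (-1:ℤ)^(n+1-j) = (-1:ℤ)^(n+1) * (-1:ℤ)^j := by
          have : (-1:ℤ)^(n+1-j) * (-1:ℤ)^j = (-1:ℤ)^(n+1) := by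
            rw [← pow_add]; congr 1; omega
          have hsq : (-1:ℤ)^j * (-1:ℤ)^j = 1 := by
            rw [← pow_add, ← two_mul, pow_mul]; norm_num
          calc (-1:ℤ)^(n+1-j) = (-1:ℤ)^(n+1-j) * ((-1:ℤ)^j * (-1:ℤ)^j) := by rw [hsq, mul_one]
          _ = ((-1:ℤ)^(n+1-j) * (-1:ℤ)^j) * (-1:ℤ)^j := by ring
          _ = (-1:ℤ)^(n+1) * (-1:ℤ)^j := by rw [this]
        have e4 : (((X:Polynomial ℤ) + 1)^n).eval (j:ℤ) = ((j:ℤ)+1)^n := by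
          simp
        rw [e4, e1, e3]
        linear_combination ((-1:ℤ)^(n+1) * (-1:ℤ)^j * (((n+1).choose j : ℕ) : ℤ)) * e2
      have : S.eval 0 = 0 := by
        rw [hS, eval_finset_sum]
        simp only [eval_mul, eval_pow, eval_sub, eval_X, eval_C]
        rw [Finset.sum_congr rfl hev, ← Finset.mul_sum, hfd, mul_zero]
      simp [this]
    have hc : (S - X ^ (n+1)).coeff 0 = 0 := by
      have h := heval0
      rw [hq] at h
      simpa using h
    have hz : S - X ^ (n+1) = 0 := by rw [hq, hc, map_zero]
    have hfin : S = X ^ (n+1) := sub_eq_zero.mp hz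
    exact hfin

lemma abel_eval (t : ℕ) (x : ℤ) :
    x ^ t = ∑ j ∈ range (t+1), (t.choose j : ℤ) * ((j:ℤ)+1)^(j-1) * (x - j - 1)^(t-j) := by
  have h := congrArg (Polynomial.eval x) (abel_poly t)
  rw [eval_finset_sum, eval_pow, eval_X] at h
  rw [← h]
  refine Finset.sum_congr rfl (fun j hj => ?_)
  rw [eval_mul, eval_pow, eval_sub, eval_X, eval_C, eval_C]
  ring

lemma abel_split (t : ℕ) :
    (t:ℤ) ^ t = (∑ j ∈ range t, (t.choose j : ℤ) * ((j:ℤ)+1)^(j-1) * ((t:ℤ) - j - 1)^(t-j))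
      + ((t:ℤ)+1)^(t-1) := by
  rw [abel_eval t (t:ℤ), Finset.sum_range_succ]
  congr 1
  simp

open Finset

def pfCnt {n s : ℕ} (f : Fin n → Fin s) (i : ℕ) : ℕ :=
  (Finset.univ.filter (fun j => (f j : ℕ) ≤ i)).card

def Ok (n s : ℕ) (f : Fin n → Fin s) : Prop := ∀ i < s, i < pfCnt f i

instance (n s : ℕ) : DecidablePred (Ok n s) := fun _ => by unfold Ok; infer_instance

def D (n s : ℕ) : Finset (Fin n → Fin s) := Finset.univ.filter (Ok n s)

def lowSet {n s : ℕ} (t : ℕ) (f : Fin n → Fin s) : Finset (Fin n) :=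
  Finset.univ.filter (fun j => (f j : ℕ) < t)

def stat {n s : ℕ} (f : Fin n → Fin s) : ℕ :=
  if h : ∃ i, i < s ∧ pfCnt f i ≤ i then Nat.find h else s

lemma pfCnt_mono {n s : ℕ} (f : Fin n → Fin s) {i i' : ℕ} (h : i ≤ i') :
    pfCnt f i ≤ pfCnt f i' :=
  Finset.card_le_card (Finset.monotone_filter_right _ (fun j _ hj => le_trans hj h))

lemma stat_le {n s : ℕ} (f : Fin n → Fin s) : stat f ≤ s := by
  unfold stat
  split_ifs with h
  · exact le_of_lt (Nat.find_spec h).1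
  · exact le_rfl

lemma stat_eq_s_iff {n s : ℕ} (f : Fin n → Fin s) : stat f = s ↔ Ok n s f := by
  unfold stat
  split_ifs with h
  · constructor
    · intro he
      have hsp := Nat.find_spec h
      rw [he] at hsp
      exact absurd hsp.1 (lt_irrefl s)
    · intro hok
      have hsp := Nat.find_spec h
      exact absurd (hok _ hsp.1) (not_lt.mpr hsp.2)
  · constructor
    · intro _
      intro i hi
      by_contra hc
      exact h ⟨i, hi, not_lt.mp hc⟩
    · intro _; rfl

lemma stat_eq_iff {n s : ℕ} (f : Fin n → Fin s) {t : ℕ} (ht : t < s) :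
    stat f = t ↔ (∀ i < t, i < pfCnt f i) ∧ pfCnt f t ≤ t := by
  constructor
  · intro he
    have hex : ∃ i, i < s ∧ pfCnt f i ≤ i := by
      by_contra hc
      rw [stat, dif_neg hc] at he
      omega
    rw [stat, dif_pos hex] at he
    constructor
    · intro i hi
      have hm := Nat.find_min hex (show i < Nat.find hex by omega)
      push_neg at hm
      exact hm (by omega)
    · have := (Nat.find_spec hex).2
      rwa [he] at this
  · rintro ⟨h1, h2⟩
    have hex : ∃ i, i < s ∧ pfCnt f i ≤ i := ⟨t, ht, h2⟩
    rw [stat, dif_pos hex]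
    have hle : Nat.find hex ≤ t := Nat.find_min' hex ⟨ht, h2⟩
    have hge : ¬ Nat.find hex < t := by
      intro hlt
      have := (Nat.find_spec hex).2
      exact absurd this (not_le.mpr (h1 _ hlt))
    omega

lemma stat_struct {n s : ℕ} (f : Fin n → Fin s) {t : ℕ} (ht : t < s) (he : stat f = t) :
    (lowSet t f).card = t ∧ ∀ j ∉ lowSet t f, t < (f j : ℕ) := by
  obtain ⟨h1, h2⟩ := (stat_eq_iff f ht).mp he
  have hsub : lowSet t f ⊆ Finset.univ.filter (fun j => (f j : ℕ) ≤ t) := by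
    intro j hj
    simp only [lowSet, Finset.mem_filter] at *
    exact ⟨hj.1, le_of_lt hj.2⟩
  have hcard_le : (Finset.univ.filter (fun j => (f j : ℕ) ≤ t)).card ≤ t := h2
  have hcard_ge : t ≤ (lowSet t f).card := by
    rcases Nat.eq_zero_or_pos t with rfl | htpos
    · exact Nat.zero_le _
    · have : lowSet t f = Finset.univ.filter (fun j => (f j : ℕ) ≤ t - 1) := by
        apply Finset.filter_congr
        intro j _
        constructor <;> (intro; omega)
      rw [this]
      have := h1 (t-1) (by omega)
      unfold pfCnt at this
      omega
  have heq : Finset.univ.filter (fun j => (f j : ℕ) ≤ t) = lowSet t f :=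
    (Finset.eq_of_subset_of_card_le hsub (le_trans hcard_le hcard_ge)).symm
  constructor
  · have := Finset.card_le_card hsub
    omega
  · intro j hj
    rw [← heq] at hj
    simp only [Finset.mem_filter, Finset.mem_univ, true_and] at hj
    omega

section Fiber

variable {n s t : ℕ} (A : Finset (Fin n)) (hA : A.card = t)

def eMap (k : Fin t) : Fin n := (A.orderIsoOfFin hA k : Fin n)

lemma eMap_mem (k : Fin t) : eMap A hA k ∈ A := (A.orderIsoOfFin hA k).2

lemma eMap_inj : Function.Injective (eMap A hA) := fun a b h =>
  (A.orderIsoOfFin hA).injective (Subtype.ext h)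

lemma eMap_surj : ∀ j ∈ A, ∃ k, eMap A hA k = j := fun j hj =>
  ⟨(A.orderIsoOfFin hA).symm ⟨j, hj⟩, by simp [eMap]⟩

lemma eMap_symm_val (k : Fin t) (h : eMap A hA k ∈ A) :
    (A.orderIsoOfFin hA).symm ⟨eMap A hA k, h⟩ = k := by
  have : (⟨eMap A hA k, h⟩ : {x // x ∈ A}) = A.orderIsoOfFin hA k := Subtype.ext rfl
  rw [this, OrderIso.symm_apply_apply]

def rho (f : Fin n → Fin s) : Fin t → Fin t :=
  fun k => ⟨min ((f (eMap A hA k)) : ℕ) (t-1), by have := k.pos; omega⟩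

lemma cnt_transfer (f : Fin n → Fin s) (g : Fin t → Fin t)
    (hfg : ∀ k : Fin t, (f (eMap A hA k) : ℕ) = (g k : ℕ))
    (hout : ∀ j ∉ A, t ≤ (f j : ℕ)) {i : ℕ} (hi : i < t) :
    pfCnt f i = pfCnt g i := by
  unfold pfCnt
  refine (Finset.card_bij (fun k _ => eMap A hA k) ?_ ?_ ?_).symm
  · intro k hk
    simp only [Finset.mem_filter, Finset.mem_univ, true_and] at hk ⊢
    rw [hfg k]; exact hk
  · intro a _ b _ h
    exact eMap_inj A hA h
  · intro j hj
    simp only [Finset.mem_filter, Finset.mem_univ, true_and] at hj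
    have hjA : j ∈ A := by
      by_contra hc
      have := hout j hc
      omega
    obtain ⟨k, hk⟩ := eMap_surj A hA j hjA
    have hkmem : k ∈ Finset.univ.filter (fun k => (g k : ℕ) ≤ i) := by
      simp only [Finset.mem_filter, Finset.mem_univ, true_and]
      rw [← hfg k, hk]
      exact hj
    exact ⟨k, hkmem, hk⟩

lemma rho_mem_D (hts : t < s) (f : Fin n → Fin s) (h1 : stat f = t) (h2 : lowSet t f = A) :
    rho A hA f ∈ D t t := by
  obtain ⟨hcard, hout⟩ := stat_struct f hts h1
  have hlowval : ∀ k : Fin t, (f (eMap A hA k) : ℕ) < t := by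
    intro k
    have : eMap A hA k ∈ lowSet t f := h2 ▸ eMap_mem A hA k
    simpa [lowSet] using this
  have hfg : ∀ k : Fin t, (f (eMap A hA k) : ℕ) = ((rho A hA f) k : ℕ) := by
    intro k
    simp only [rho]
    have := hlowval k
    omega
  have hout' : ∀ j ∉ A, t ≤ (f j : ℕ) := by
    intro j hj
    rw [← h2] at hj
    exact le_of_lt (hout j hj)
  simp only [D, Finset.mem_filter, Finset.mem_univ, true_and]
  intro i hi
  rw [← cnt_transfer A hA f (rho A hA f) hfg hout' hi]
  exact ((stat_eq_iff f hts).mp h1).1 i hi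

lemma card_filter_gt (s t : ℕ) :
    (Finset.univ.filter fun x : Fin s => t < (x : ℕ)).card = s - (t + 1) := by
  rw [← Nat.card_Ico (t+1) s]
  refine Finset.card_bij (fun x _ => (x : ℕ)) ?_ ?_ ?_
  · intro x hx
    simp only [Finset.mem_filter, Finset.mem_univ, true_and] at hx
    simp only [Finset.mem_Ico]
    exact ⟨hx, x.isLt⟩
  · intro a _ b _ h
    exact Fin.ext h
  · intro m hm
    simp only [Finset.mem_Ico] at hm
    refine ⟨⟨m, hm.2⟩, ?_, rfl⟩
    simp only [Finset.mem_filter, Finset.mem_univ, true_and]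
    omega

lemma fiber_card (hts : t < s) (g : Fin t → Fin t) (hg : g ∈ D t t) :
    (Finset.univ.filter fun f : Fin n → Fin s =>
        stat f = t ∧ lowSet t f = A ∧ rho A hA f = g).card
      = (s - t - 1) ^ (n - t) := by
  classical
  set B : Fin n → Finset (Fin s) := fun j =>
    if h : j ∈ A then {Fin.castLE hts.le (g ((A.orderIsoOfFin hA).symm ⟨j, h⟩))}
    else Finset.univ.filter (fun x : Fin s => t < (x : ℕ)) with hB
  have hgOk : Ok t t g := by simpa [D] using hg
  have hset : (Finset.univ.filter fun f : Fin n → Fin s =>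
      stat f = t ∧ lowSet t f = A ∧ rho A hA f = g) = Fintype.piFinset B := by
    ext f
    simp only [Finset.mem_filter, Finset.mem_univ, true_and, Fintype.mem_piFinset]
    constructor
    · rintro ⟨h1, h2, h3⟩
      obtain ⟨hcard, hout⟩ := stat_struct f hts h1
      intro j
      by_cases hj : j ∈ A
      · rw [hB]
        simp only [dif_pos hj, Finset.mem_singleton]
        obtain ⟨k, hk⟩ := eMap_surj A hA j hj
        subst hk
        rw [eMap_symm_val A hA k hj]
        have hjlow : eMap A hA k ∈ lowSet t f := h2 ▸ hj
        have hflt : (f (eMap A hA k) : ℕ) < t := by simpa [lowSet] using hjlow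
        have hval : ((rho A hA f) k : ℕ) = (g k : ℕ) := by rw [h3]
        apply Fin.ext
        rw [Fin.coe_castLE, ← hval]
        simp only [rho]
        omega
      · rw [hB]
        simp only [dif_neg hj, Finset.mem_filter, Finset.mem_univ, true_and]
        rw [← h2] at hj
        exact hout j hj
    · intro hm
      have hin : ∀ (j) (hj : j ∈ A),
          f j = Fin.castLE hts.le (g ((A.orderIsoOfFin hA).symm ⟨j, hj⟩)) := by
        intro j hj
        have := hm j
        rw [hB] at this
        simpa [dif_pos hj] using this
      have hout : ∀ j ∉ A, t < (f j : ℕ) := by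
        intro j hj
        have := hm j
        rw [hB] at this
        simpa [dif_neg hj] using this
      have hval : ∀ k : Fin t, (f (eMap A hA k) : ℕ) = (g k : ℕ) := by
        intro k
        have hmem := eMap_mem A hA k
        rw [hin (eMap A hA k) hmem, eMap_symm_val A hA k hmem, Fin.coe_castLE]
      have hlow : lowSet t f = A := by
        ext j
        simp only [lowSet, Finset.mem_filter, Finset.mem_univ, true_and]
        constructor
        · intro hlt
          by_contra hc
          have := hout j hc
          omega
        · intro hj
          obtain ⟨k, hk⟩ := eMap_surj A hA j hj
          rw [← hk, hval k]
          exact (g k).isLt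
      have hrho : rho A hA f = g := by
        funext k
        apply Fin.ext
        simp only [rho]
        rw [hval k]
        have := (g k).isLt
        omega
      have hstat : stat f = t := by
        rw [stat_eq_iff f hts]
        constructor
        · intro i hi
          rw [cnt_transfer A hA f g hval (fun j hj => le_of_lt (hout j hj)) hi]
          exact hgOk i hi
        · have hsub : (Finset.univ.filter fun j => (f j : ℕ) ≤ t) ⊆ A := by
            intro j hj
            simp only [Finset.mem_filter, Finset.mem_univ, true_and] at hj
            by_contra hc
            have := hout j hc
            omega
          calc pfCnt f t ≤ A.card := Finset.card_le_card hsub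
          _ = t := hA
      exact ⟨hstat, hlow, hrho⟩
  rw [hset, Fintype.card_piFinset]
  rw [← Finset.prod_mul_prod_compl A fun j => (B j).card]
  have hprodA : ∏ j ∈ A, (B j).card = 1 := by
    apply Finset.prod_eq_one
    intro j hj
    rw [hB]
    simp [dif_pos hj]
  have hprodC : ∏ j ∈ Aᶜ, (B j).card = (s - t - 1) ^ (n - t) := by
    have : ∀ j ∈ Aᶜ, (B j).card = s - t - 1 := by
      intro j hj
      rw [Finset.mem_compl] at hj
      rw [hB]
      simp only [dif_neg hj]
      rw [card_filter_gt]
      omega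
    rw [Finset.prod_congr rfl this, Finset.prod_const]
    congr 1
    rw [Finset.card_compl, hA, Fintype.card_fin]
  rw [hprodA, hprodC, one_mul]

end Fiber

lemma A_card {n s t : ℕ} (A : Finset (Fin n)) (hA : A.card = t) (hts : t < s) :
    (Finset.univ.filter fun f : Fin n → Fin s => stat f = t ∧ lowSet t f = A).card
      = (D t t).card * (s - t - 1) ^ (n - t) := by
  classical
  have hmem : ∀ f ∈ (Finset.univ.filter fun f : Fin n → Fin s => stat f = t ∧ lowSet t f = A),
      rho A hA f ∈ D t t := by
    intro f hf
    simp only [Finset.mem_filter, Finset.mem_univ, true_and] at hf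
    exact rho_mem_D A hA hts f hf.1 hf.2
  rw [Finset.card_eq_sum_card_fiberwise hmem]
  have hfib : ∀ g ∈ D t t,
      ((Finset.univ.filter fun f : Fin n → Fin s => stat f = t ∧ lowSet t f = A).filter
        fun f => rho A hA f = g).card = (s - t - 1) ^ (n - t) := by
    intro g hg
    rw [Finset.filter_filter]
    simp only [and_assoc]
    exact fiber_card A hA hts g hg
  rw [Finset.sum_congr rfl hfib, Finset.sum_const, smul_eq_mul]

lemma decomp (n s : ℕ) :
    s ^ n = (D n s).card
      + ∑ t ∈ Finset.range s, n.choose t * ((D t t).card * (s - t - 1) ^ (n - t)) := by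
  classical
  have h0 : (Finset.univ : Finset (Fin n → Fin s)).card = s ^ n := by
    rw [Finset.card_univ]
    simp
  have hmem : ∀ f ∈ (Finset.univ : Finset (Fin n → Fin s)), stat f ∈ Finset.range (s+1) :=
    fun f _ => Finset.mem_range.mpr (Nat.lt_succ_of_le (stat_le f))
  have h1 := Finset.card_eq_sum_card_fiberwise hmem
  rw [h0, Finset.sum_range_succ] at h1
  have hDs : (Finset.univ.filter fun f : Fin n → Fin s => stat f = s) = D n s := by
    ext f
    simp only [Finset.mem_filter, Finset.mem_univ, true_and, D]
    exact stat_eq_s_iff f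
  rw [hDs] at h1
  have hterm : ∀ t ∈ Finset.range s,
      ((Finset.univ : Finset (Fin n → Fin s)).filter fun f => stat f = t).card
        = n.choose t * ((D t t).card * (s - t - 1) ^ (n - t)) := by
    intro t ht
    have hts := Finset.mem_range.mp ht
    have hmem2 : ∀ f ∈ ((Finset.univ : Finset (Fin n → Fin s)).filter fun f => stat f = t),
        lowSet t f ∈ Finset.powersetCard t (Finset.univ : Finset (Fin n)) := by
      intro f hf
      simp only [Finset.mem_filter, Finset.mem_univ, true_and] at hf
      rw [Finset.mem_powersetCard]
      exact ⟨Finset.subset_univ _, (stat_struct f hts hf).1⟩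
    rw [Finset.card_eq_sum_card_fiberwise hmem2]
    have hfib : ∀ A ∈ Finset.powersetCard t (Finset.univ : Finset (Fin n)),
        (((Finset.univ : Finset (Fin n → Fin s)).filter fun f => stat f = t).filter
          fun f => lowSet t f = A).card = (D t t).card * (s - t - 1) ^ (n - t) := by
      intro A hA'
      rw [Finset.mem_powersetCard] at hA'
      rw [Finset.filter_filter]
      exact A_card A hA'.2 hts
    rw [Finset.sum_congr rfl hfib, Finset.sum_const, smul_eq_mul,
      Finset.card_powersetCard, Finset.card_univ, Fintype.card_fin]
  rw [Finset.sum_congr rfl hterm] at h1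
  omega

lemma P_eq (t : ℕ) : (((D t t).card : ℤ)) = ((t : ℤ) + 1) ^ (t - 1) := by
  induction t using Nat.strong_induction_on with
  | _ t ih =>
    have hd := decomp t t
    have hdz : ((t : ℤ)) ^ t = ((D t t).card : ℤ)
        + ∑ j ∈ range t, (t.choose j : ℤ) * (((D j j).card : ℤ) * ((t:ℤ) - j - 1) ^ (t - j)) := by
      have h := congrArg (Nat.cast (R := ℤ)) hd
      push_cast at h
      rw [h]
      congr 1
      refine Finset.sum_congr rfl fun j hj => ?_
      have hjt := Finset.mem_range.mp hj
      have hc : ((t - j - 1 : ℕ) : ℤ) = (t : ℤ) - j - 1 := by omega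
      rw [hc]
    rw [Finset.sum_congr rfl (fun j hj => by
      rw [ih j (Finset.mem_range.mp hj)] :
        ∀ j ∈ range t, (t.choose j : ℤ) * (((D j j).card : ℤ) * ((t:ℤ) - j - 1) ^ (t - j))
          = (t.choose j : ℤ) * (((j:ℤ)+1)^(j-1) * ((t:ℤ) - j - 1) ^ (t - j)))] at hdz
    have habel := abel_split t
    rw [Finset.sum_congr rfl (fun j _ => by ring :
        ∀ j ∈ range t, (t.choose j : ℤ) * ((j:ℤ)+1)^(j-1) * ((t:ℤ) - j - 1)^(t-j)
          = (t.choose j : ℤ) * (((j:ℤ)+1)^(j-1) * ((t:ℤ) - j - 1) ^ (t - j)))] at habel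
    linarith

lemma ncard_eq_D (n s : ℕ) (h1 : 1 ≤ s) (h2 : s ≤ n) :
    {π : Fin n → ℕ | IsRPF n s π}.ncard = (D n s).card := by
  classical
  have hinj : Function.Injective (fun f : Fin n → Fin s => (fun j => (f j : ℕ) + 1)) := by
    intro f f' h
    funext j
    have := congrFun h j
    simp only at this
    exact Fin.ext (by omega)
  have himg : {π : Fin n → ℕ | IsRPF n s π}
      = ↑((D n s).image (fun f : Fin n → Fin s => (fun j => (f j : ℕ) + 1))) := by
    ext π
    simp only [Set.mem_setOf_eq, Finset.coe_image, Set.mem_image, Finset.mem_coe]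
    constructor
    · intro hπ
      have hval : ∀ j, 1 ≤ π j ∧ π j ≤ s := by
        intro j
        have := hπ.1 j
        simpa [Finset.mem_Icc] using this
      refine ⟨fun j => ⟨π j - 1, by have := hval j; omega⟩, ?_, ?_⟩
      · simp only [D, Finset.mem_filter, Finset.mem_univ, true_and]
        intro i hi
        have hc := hπ.2 (i+1) (by simp only [Finset.mem_Icc]; omega)
        show i < (Finset.univ.filter fun j => π j - 1 ≤ i).card
        have heq : (Finset.univ.filter fun j => π j - 1 ≤ i)
            = (Finset.univ.filter fun j => π j ≤ i + 1) := by
          apply Finset.filter_congr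
          intro j _
          have := hval j
          constructor <;> (intro; omega)
        rw [heq]
        omega
      · funext j
        have := hval j
        simp only
        omega
    · rintro ⟨f, hf, hfeq⟩
      subst hfeq
      have hOk : Ok n s f := by simpa [D] using hf
      constructor
      · intro j
        simp only [Finset.mem_Icc]
        have := (f j).isLt
        omega
      · intro i hi
        simp only [Finset.mem_Icc] at hi
        by_cases his : i ≤ s
        · have := hOk (i-1) (by omega)
          show i ≤ (Finset.univ.filter fun j => (f j : ℕ) + 1 ≤ i).card
          have heq : (Finset.univ.filter fun j => (f j : ℕ) + 1 ≤ i)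
              = (Finset.univ.filter fun j => (f j : ℕ) ≤ i - 1) := by
            apply Finset.filter_congr
            intro j _
            constructor <;> (intro; omega)
          rw [heq]
          unfold pfCnt at this
          omega
        · show i ≤ (Finset.univ.filter fun j => (f j : ℕ) + 1 ≤ i).card
          have heq : (Finset.univ.filter fun j => (f j : ℕ) + 1 ≤ i)
              = (Finset.univ : Finset (Fin n)) := by
            apply Finset.filter_true_of_mem
            intro j _
            have := (f j).isLt
            omega
          rw [heq, Finset.card_univ, Fintype.card_fin]
          omega
  rw [himg, Set.ncard_coe_finset, Finset.card_image_of_injective _ hinj]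

theorem count_restricted_pf_complement (n s : ℕ) (h1 : 1 ≤ s) (h2 : s ≤ n) :
    ({π : Fin n → ℕ | IsRPF n s π}.ncard : ℤ) =
      (s : ℤ) ^ n -
        ∑ i ∈ Finset.range s,
          (n.choose i : ℤ) * ((i : ℤ) + 1) ^ (i - 1) * ((s : ℤ) - i - 1) ^ (n - i) := by
  rw [ncard_eq_D n s h1 h2]
  have hd := decomp n s
  have hdz : ((s : ℤ)) ^ n = ((D n s).card : ℤ)
      + ∑ t ∈ range s, (n.choose t : ℤ) * (((D t t).card : ℤ) * ((s:ℤ) - t - 1) ^ (n - t)) := by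
    have h := congrArg (Nat.cast (R := ℤ)) hd
    push_cast at h
    rw [h]
    congr 1
    refine Finset.sum_congr rfl fun t ht => ?_
    have htt := Finset.mem_range.mp ht
    have hc : ((s - t - 1 : ℕ) : ℤ) = (s : ℤ) - t - 1 := by omega
    rw [hc]
  rw [Finset.sum_congr rfl (fun t ht => by rw [P_eq t] :
      ∀ t ∈ range s, (n.choose t : ℤ) * (((D t t).card : ℤ) * ((s:ℤ) - t - 1) ^ (n - t))
        = (n.choose t : ℤ) * (((t:ℤ)+1)^(t-1) * ((s:ℤ) - t - 1) ^ (n - t)))] at hdz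
  rw [Finset.sum_congr rfl (fun t _ => by ring :
      ∀ t ∈ range s, (n.choose t : ℤ) * ((t:ℤ)+1)^(t-1) * ((s:ℤ) - t - 1) ^ (n - t)
        = (n.choose t : ℤ) * (((t:ℤ)+1)^(t-1) * ((s:ℤ) - t - 1) ^ (n - t)))]
  linarith
end

section
/- For 1 ≤ s ≤ n, the number of [s]-restricted parking functions on n cars equals Σ_{i=s}^{n} C(n,i)·(i+1)^{i−1}·(s−i−1)^{n−i}. -/
open Finset

open scoped Classical in
noncomputable def rpf (n s : ℕ) : Finset (Fin n → ℕ) :=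
  (Fintype.piFinset fun _ => Finset.Icc 1 s).filter
    (fun π => ∀ i ∈ Finset.Icc 1 n, i ≤ (Finset.univ.filter (fun j => π j ≤ i)).card)

lemma mem_rpf {n s : ℕ} {π : Fin n → ℕ} : π ∈ rpf n s ↔ IsRPF n s π := by
  simp [rpf, IsRPF, Fintype.mem_piFinset]

lemma card_filter_orderIso {n : ℕ} (A : Finset (Fin n)) (p : Fin n → Prop) [DecidablePred p] :
    ((Finset.univ : Finset (Fin A.card)).filter
        (fun k => p ((A.orderIsoOfFin rfl k : Fin n)))).card
      = (A.filter p).card := by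
  classical
  apply Finset.card_nbij (fun k => ((A.orderIsoOfFin rfl k : Fin n)))
  · intro k hk
    rw [Finset.mem_coe, Finset.mem_filter] at hk ⊢
    exact ⟨(A.orderIsoOfFin rfl k).2, hk.2⟩
  · intro a _ b _ hab
    exact (A.orderIsoOfFin rfl).injective (Subtype.coe_injective hab)
  · intro j hj
    simp only [Finset.coe_filter, Set.mem_setOf_eq, Finset.mem_coe, Finset.mem_filter] at hj
    refine ⟨(A.orderIsoOfFin rfl).symm ⟨j, hj.1⟩, ?_, ?_⟩
    · simp only [Finset.coe_filter, Set.mem_setOf_eq, Finset.mem_univ, true_and,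
        OrderIso.apply_symm_apply]
      exact hj.2
    · simp only [OrderIso.apply_symm_apply]

lemma rpf_rec (n s : ℕ) (hs : 1 ≤ s) (hn : s + 1 ≤ n) :
    (rpf n (s+1)).card = ∑ i ∈ Icc s n, n.choose i * (rpf i s).card := by
  classical
  set B : Finset (Finset (Fin n)) :=
    ((Finset.univ : Finset (Fin n)).powerset.filter fun A => s ≤ A.card) with hB
  have hmap : ∀ π ∈ rpf n (s+1), (Finset.univ.filter fun j => π j ≤ s) ∈ B := by
    intro π hπ
    rw [mem_rpf] at hπ
    rw [hB, Finset.mem_filter, Finset.mem_powerset]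
    exact ⟨Finset.subset_univ _, hπ.2 s (Finset.mem_Icc.mpr ⟨hs, le_trans (Nat.le_succ s) hn⟩)⟩
  rw [Finset.card_eq_sum_card_fiberwise hmap]
  have hfib : ∀ A ∈ B,
      ((rpf n (s+1)).filter fun π => (Finset.univ.filter fun j => π j ≤ s) = A).card
        = (rpf A.card s).card := by
    intro A hA
    rw [hB, Finset.mem_filter, Finset.mem_powerset] at hA
    obtain ⟨-, hcard⟩ := hA
    have hcardn : A.card ≤ n := le_trans (Finset.card_le_univ A) (by simp)
    set e := A.orderIsoOfFin rfl with he
    apply Finset.card_nbij' (fun π => fun k => π ((e k : Fin n)))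
        (fun ρ => fun j => if h : j ∈ A then ρ (e.symm ⟨j, h⟩) else s+1)
    · -- forward
      intro π hπ
      rw [Finset.mem_coe, Finset.mem_filter, mem_rpf] at hπ
      obtain ⟨⟨hval, hcond⟩, hAeq⟩ := hπ
      rw [Finset.mem_coe, mem_rpf]
      constructor
      · intro k
        show π ((e k : Fin n)) ∈ Icc 1 s
        have hk2 : ∀ x ∈ A, π x ≤ s := by
          intro x hx
          rw [← hAeq, Finset.mem_filter] at hx
          exact hx.2
        have hv := hval (e k)
        rw [Finset.mem_Icc] at hv ⊢
        exact ⟨hv.1, hk2 _ (e k).2⟩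
      · intro t ht
        show t ≤ ((Finset.univ : Finset (Fin A.card)).filter fun k => π ((e k : Fin n)) ≤ t).card
        rw [Finset.mem_Icc] at ht
        have hcount :
            ((Finset.univ : Finset (Fin A.card)).filter fun k => π ((e k : Fin n)) ≤ t).card
            = (A.filter fun j => π j ≤ t).card := card_filter_orderIso A (fun x => π x ≤ t)
        rw [hcount]
        by_cases hts : t ≤ s
        · have hsub : (A.filter fun j => π j ≤ t) = Finset.univ.filter fun j : Fin n => π j ≤ t := by
            ext j
            simp only [Finset.mem_filter, Finset.mem_univ, true_and, ← hAeq]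
            constructor
            · rintro ⟨-, h2⟩; exact h2
            · intro h2; exact ⟨h2.trans hts, h2⟩
          rw [hsub]
          exact hcond t (Finset.mem_Icc.mpr ⟨ht.1, le_trans ht.2 hcardn⟩)
        · have hall : (A.filter fun j => π j ≤ t) = A := by
            apply Finset.filter_true_of_mem
            intro j hj
            rw [← hAeq, Finset.mem_filter] at hj
            omega
          rw [hall]
          exact ht.2
    · -- backward
      intro ρ hρ
      rw [Finset.mem_coe, mem_rpf] at hρ
      obtain ⟨hval, hcond⟩ := hρ
      have hAeq : (Finset.univ.filter fun j : Fin n =>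
          (if h : j ∈ A then ρ (e.symm ⟨j, h⟩) else s+1) ≤ s) = A := by
        ext j
        simp only [Finset.mem_filter, Finset.mem_univ, true_and]
        by_cases h : j ∈ A
        · rw [dif_pos h]
          have hv := hval (e.symm ⟨j, h⟩)
          rw [Finset.mem_Icc] at hv
          exact iff_of_true hv.2 h
        · rw [dif_neg h]
          exact iff_of_false (by omega) h
      rw [Finset.mem_coe, Finset.mem_filter, mem_rpf]
      refine ⟨⟨?_, ?_⟩, hAeq⟩
      · intro j
        show (if h : j ∈ A then ρ (e.symm ⟨j, h⟩) else s+1) ∈ Icc 1 (s+1)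
        by_cases h : j ∈ A
        · rw [dif_pos h]
          have hv := hval (e.symm ⟨j, h⟩)
          rw [Finset.mem_Icc] at hv ⊢
          omega
        · rw [dif_neg h, Finset.mem_Icc]
          omega
      · intro t ht
        show t ≤ ((Finset.univ : Finset (Fin n)).filter fun j =>
            (if h : j ∈ A then ρ (e.symm ⟨j, h⟩) else s+1) ≤ t).card
        rw [Finset.mem_Icc] at ht
        by_cases hts : t ≤ s
        · have h1 : ((Finset.univ : Finset (Fin A.card)).filter fun k =>
              (if h : ((e k : Fin n)) ∈ A then ρ (e.symm ⟨(e k : Fin n), h⟩) else s+1) ≤ t).card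
              = (A.filter fun j => (if h : j ∈ A then ρ (e.symm ⟨j, h⟩) else s+1) ≤ t).card :=
            card_filter_orderIso A (fun x => (if h : x ∈ A then ρ (e.symm ⟨x, h⟩) else s+1) ≤ t)
          have h2 : ∀ k : Fin A.card,
              (if h : ((e k : Fin n)) ∈ A then ρ (e.symm ⟨(e k : Fin n), h⟩) else s+1) = ρ k := by
            intro k
            rw [dif_pos (e k).2]
            congr 1
            rw [show (⟨(e k : Fin n), (e k).2⟩ : {x // x ∈ A}) = e k from Subtype.ext rfl]
            exact e.symm_apply_apply k
          have h3 : (A.filter fun j => (if h : j ∈ A then ρ (e.symm ⟨j, h⟩) else s+1) ≤ t)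
              = Finset.univ.filter fun j : Fin n =>
                  (if h : j ∈ A then ρ (e.symm ⟨j, h⟩) else s+1) ≤ t := by
            ext j
            simp only [Finset.mem_filter, Finset.mem_univ, true_and]
            constructor
            · rintro ⟨-, hh⟩; exact hh
            · intro hh
              refine ⟨?_, hh⟩
              by_contra hjA
              rw [dif_neg hjA] at hh
              omega
          have h4 : ((Finset.univ : Finset (Fin A.card)).filter fun k => ρ k ≤ t).card
              = (Finset.univ.filter fun j : Fin n =>
                  (if h : j ∈ A then ρ (e.symm ⟨j, h⟩) else s+1) ≤ t).card := by
            rw [← h3, ← h1]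
            congr 1
            apply Finset.filter_congr
            intro k _
            rw [h2 k]
          rw [← h4]
          exact hcond t (Finset.mem_Icc.mpr ⟨ht.1, hts.trans hcard⟩)
        · have hall : (Finset.univ.filter fun j : Fin n =>
              (if h : j ∈ A then ρ (e.symm ⟨j, h⟩) else s+1) ≤ t) = Finset.univ := by
            apply Finset.filter_true_of_mem
            intro j _
            by_cases h : j ∈ A
            · rw [dif_pos h]
              have hv := hval (e.symm ⟨j, h⟩)
              rw [Finset.mem_Icc] at hv
              omega
            · rw [dif_neg h]; omega
          rw [hall, Finset.card_univ, Fintype.card_fin]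
          exact ht.2
    · -- left inverse
      intro π hπ
      rw [Finset.mem_coe, Finset.mem_filter] at hπ
      obtain ⟨hπ1, hAeq⟩ := hπ
      rw [mem_rpf] at hπ1
      funext j
      show (if h : j ∈ A then (fun k => π ((e k : Fin n))) (e.symm ⟨j, h⟩) else s+1) = π j
      by_cases h : j ∈ A
      · rw [dif_pos h]
        exact congrArg (fun x : {x // x ∈ A} => π (x : Fin n)) (e.apply_symm_apply ⟨j, h⟩)
      · rw [dif_neg h]
        rw [← hAeq] at h
        simp only [Finset.mem_filter, Finset.mem_univ, true_and, not_le] at h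
        have hv := hπ1.1 j
        rw [Finset.mem_Icc] at hv
        omega
    · -- right inverse
      intro ρ hρ
      funext k
      show (if h : ((e k : Fin n)) ∈ A then ρ (e.symm ⟨(e k : Fin n), h⟩) else s+1) = ρ k
      rw [dif_pos (e k).2]
      congr 1
      rw [show (⟨(e k : Fin n), (e k).2⟩ : {x // x ∈ A}) = e k from Subtype.ext rfl]
      exact e.symm_apply_apply k
  rw [Finset.sum_congr rfl hfib]
  have hmap2 : ∀ A ∈ B, A.card ∈ Icc s n := by
    intro A hA
    rw [hB, Finset.mem_filter, Finset.mem_powerset] at hA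
    rw [Finset.mem_Icc]
    exact ⟨hA.2, le_trans (Finset.card_le_univ A) (by simp)⟩
  rw [← Finset.sum_fiberwise_of_maps_to hmap2 (fun A => (rpf A.card s).card)]
  refine Finset.sum_congr rfl fun i hi => ?_
  rw [Finset.mem_Icc] at hi
  have hconst : ∀ A ∈ B.filter (fun A => A.card = i), (rpf A.card s).card = (rpf i s).card := by
    intro A hA
    rw [Finset.mem_filter] at hA
    rw [hA.2]
  rw [Finset.sum_congr rfl hconst, Finset.sum_const, smul_eq_mul]
  congr 1
  have hset : B.filter (fun A => A.card = i) = Finset.powersetCard i Finset.univ := by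
    ext A
    rw [Finset.mem_filter, hB, Finset.mem_filter, Finset.mem_powerset, Finset.mem_powersetCard]
    constructor
    · rintro ⟨⟨-, -⟩, h⟩
      exact ⟨Finset.subset_univ _, h⟩
    · rintro ⟨-, h⟩
      exact ⟨⟨Finset.subset_univ _, h ▸ hi.1⟩, h⟩
  rw [hset, Finset.card_powersetCard, Finset.card_univ, Fintype.card_fin]

lemma rpf_one (n : ℕ) (hn : 1 ≤ n) : (rpf n 1).card = 1 := by
  have h : rpf n 1 = {fun _ => 1} := by
    ext π
    simp only [mem_rpf, IsRPF, mem_singleton]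
    constructor
    · rintro ⟨ha, -⟩
      funext j
      have := ha j
      rw [Finset.mem_Icc] at this
      omega
    · rintro rfl
      refine ⟨fun j => by simp, fun i hi => ?_⟩
      rw [Finset.mem_Icc] at hi
      have h2 : (Finset.univ.filter fun _ : Fin n => (1:ℕ) ≤ i) = Finset.univ :=
        Finset.filter_true_of_mem (fun x _ => hi.1)
      rw [h2, Finset.card_univ, Fintype.card_fin]
      exact hi.2
  rw [h, Finset.card_singleton]

def T (n m : ℕ) : ℤ := ∑ j ∈ Finset.range (n+1), (-1:ℤ)^j * (n.choose j) * ((j:ℤ)+1)^m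

lemma T_succ (n m : ℕ) :
    T (n+1) m = T n m - ∑ k ∈ Finset.range (m+1), (m.choose k : ℤ) * T n k := by
  set S2 := ∑ j ∈ Finset.range (n+1), (-1:ℤ)^j * (n.choose (j+1)) * ((j:ℤ)+2)^m with hS2def
  set S1 := ∑ j ∈ Finset.range (n+1), (-1:ℤ)^j * (n.choose j) * ((j:ℤ)+2)^m with hS1def
  have eW : T n m = -S2 + 1 := by
    have h1 : ∑ j ∈ Finset.range (n+1+1), (-1:ℤ)^j * (n.choose j) * ((j:ℤ)+1)^m = T n m := by
      rw [Finset.sum_range_succ, Nat.choose_succ_self, T]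
      push_cast
      ring
    rw [← h1, Finset.sum_range_succ']
    have h2 : ∀ j ∈ Finset.range (n+1),
        (-1:ℤ)^(j+1) * (n.choose (j+1)) * (((j+1:ℕ):ℤ)+1)^m
        = -((-1:ℤ)^j * (n.choose (j+1)) * ((j:ℤ)+2)^m) := by
      intro j _
      push_cast
      ring
    rw [Finset.sum_congr rfl h2, Finset.sum_neg_distrib, hS2def, Nat.choose_zero_right]
    push_cast
    ring
  have eT : T (n+1) m = -S1 - S2 + 1 := by
    rw [T, Finset.sum_range_succ']
    have h2 : ∀ j ∈ Finset.range (n+1),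
        (-1:ℤ)^(j+1) * ((n+1).choose (j+1)) * (((j+1:ℕ):ℤ)+1)^m
        = -((-1:ℤ)^j * (n.choose j) * ((j:ℤ)+2)^m)
          + -((-1:ℤ)^j * (n.choose (j+1)) * ((j:ℤ)+2)^m) := by
      intro j _
      rw [Nat.choose_succ_succ]
      push_cast
      ring
    rw [Finset.sum_congr rfl h2, Finset.sum_add_distrib, Finset.sum_neg_distrib,
      Finset.sum_neg_distrib, hS1def, hS2def, Nat.choose_zero_right]
    push_cast
    ring
  have eS1 : S1 = ∑ k ∈ Finset.range (m+1), (m.choose k : ℤ) * T n k := by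
    have hb : ∀ j ∈ Finset.range (n+1), (-1:ℤ)^j * (n.choose j) * ((j:ℤ)+2)^m
        = ∑ k ∈ Finset.range (m+1),
            (m.choose k : ℤ) * ((-1:ℤ)^j * (n.choose j) * ((j:ℤ)+1)^k) := by
      intro j _
      have hp : ((j:ℤ)+2)^m
          = ∑ k ∈ Finset.range (m+1), ((j:ℤ)+1)^k * 1^(m-k) * (m.choose k) := by
        rw [← add_pow]
        ring_nf
      rw [hp, Finset.mul_sum]
      apply Finset.sum_congr rfl
      intro k _
      push_cast
      ring
    rw [hS1def, Finset.sum_congr rfl hb, Finset.sum_comm]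
    apply Finset.sum_congr rfl
    intro k _
    rw [T, Finset.mul_sum]
  rw [eT, ← eS1]
  linarith [eW]

lemma T_eq_zero : ∀ n m : ℕ, m < n → T n m = 0 := by
  intro n
  induction n with
  | zero => omega
  | succ n ih =>
    intro m hm
    rw [T_succ]
    rcases Nat.lt_or_ge m n with h | h
    · have hz : ∑ k ∈ Finset.range (m+1), (m.choose k : ℤ) * T n k = 0 :=
        Finset.sum_eq_zero fun k hk => by
          rw [ih k (lt_of_le_of_lt (Nat.lt_succ_iff.mp (Finset.mem_range.mp hk)) h), mul_zero]
      rw [ih m h, hz, sub_zero]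
    · have hmn : m = n := by omega
      subst hmn
      rw [Finset.sum_range_succ, Nat.choose_self]
      have hz : ∑ k ∈ Finset.range m, (m.choose k : ℤ) * T m k = 0 :=
        Finset.sum_eq_zero fun k hk => by
          rw [ih k (Finset.mem_range.mp hk), mul_zero]
      rw [hz]
      push_cast
      ring

def Hf (n s : ℕ) : ℤ :=
  ∑ i ∈ Finset.Icc s n, (n.choose i : ℤ) * ((i:ℤ)+1)^(i-1) * ((s:ℤ) - i - 1)^(n-i)

lemma Hf_zero (n : ℕ) (hn : 1 ≤ n) : Hf n 0 = 0 := by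
  rw [Hf]
  have hIcc : Finset.Icc 0 n = Finset.range (n+1) := by
    rw [← Finset.Ico_add_one_right_eq_Icc, Nat.Ico_zero_eq_range]
  rw [hIcc]
  have hterm : ∀ j ∈ Finset.range (n+1),
      (n.choose j : ℤ) * ((j:ℤ)+1)^(j-1) * (((0:ℕ):ℤ) - j - 1)^(n-j)
      = (-1:ℤ)^n * ((-1:ℤ)^j * (n.choose j) * ((j:ℤ)+1)^(n-1)) := by
    intro j hj
    rw [Finset.mem_range, Nat.lt_succ_iff] at hj
    have hsign : (-1:ℤ)^(n-j) = (-1)^n * (-1)^j := by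
      have h1 : (-1:ℤ)^(n-j) * (-1)^j = (-1)^n := by
        rw [← pow_add, Nat.sub_add_cancel hj]
      have h2 : (-1:ℤ)^j * (-1)^j = 1 := by
        rw [← pow_add, ← two_mul, pow_mul]
        norm_num
      calc (-1:ℤ)^(n-j) = (-1:ℤ)^(n-j) * ((-1:ℤ)^j * (-1)^j) := by rw [h2, mul_one]
        _ = (-1)^n * (-1)^j := by rw [← mul_assoc, h1]
    have hbase : (((0:ℕ):ℤ) - j - 1)^(n-j) = (-1:ℤ)^(n-j) * ((j:ℤ)+1)^(n-j) := by
      rw [show (((0:ℕ):ℤ) - j - 1) = -1 * ((j:ℤ)+1) by push_cast; ring, mul_pow]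
    have hpow : ((j:ℤ)+1)^(j-1) * ((j:ℤ)+1)^(n-j) = ((j:ℤ)+1)^(n-1) := by
      rcases Nat.eq_zero_or_pos j with hj0 | hj0
      · subst hj0; push_cast; norm_num
      · rw [← pow_add]
        congr 1
        omega
    calc (n.choose j : ℤ) * ((j:ℤ)+1)^(j-1) * (((0:ℕ):ℤ) - j - 1)^(n-j)
        = ((-1:ℤ)^(n-j)) * ((n.choose j : ℤ)) * (((j:ℤ)+1)^(j-1) * ((j:ℤ)+1)^(n-j)) := by
          rw [hbase]; ring
      _ = (-1:ℤ)^n * ((-1:ℤ)^j * (n.choose j) * ((j:ℤ)+1)^(n-1)) := by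
          rw [hpow, hsign]; ring
  rw [Finset.sum_congr rfl hterm, ← Finset.mul_sum]
  have hT : ∑ j ∈ Finset.range (n+1), (-1:ℤ)^j * (n.choose j) * ((j:ℤ)+1)^(n-1) = T n (n-1) := rfl
  rw [hT, T_eq_zero n (n-1) (by omega), mul_zero]

lemma Hf_conv (t n : ℕ) (hn : t + 1 ≤ n) :
    ∑ i ∈ Finset.Icc t n, (n.choose i : ℤ) * Hf i t = Hf n (t+1) := by
  have step1 : ∀ i ∈ Finset.Icc t n, (n.choose i : ℤ) * Hf i t
      = ∑ m ∈ Finset.Icc t i,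
          (n.choose i : ℤ) * ((i.choose m : ℤ) * ((m:ℤ)+1)^(m-1) * ((t:ℤ) - m - 1)^(i-m)) := by
    intro i _
    rw [Hf, Finset.mul_sum]
  rw [Finset.sum_congr rfl step1]
  have hcomm : ∀ (i m : ℕ), (i ∈ Finset.Icc t n ∧ m ∈ Finset.Icc t i)
      ↔ (i ∈ Finset.Icc m n ∧ m ∈ Finset.Icc t n) := by
    intro i m
    simp only [Finset.mem_Icc]
    omega
  rw [Finset.sum_comm' hcomm]
  have step2 : ∀ m ∈ Finset.Icc t n,
      ∑ i ∈ Finset.Icc m n,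
          (n.choose i : ℤ) * ((i.choose m : ℤ) * ((m:ℤ)+1)^(m-1) * ((t:ℤ) - m - 1)^(i-m))
      = (n.choose m : ℤ) * ((m:ℤ)+1)^(m-1) * ((t:ℤ) - m)^(n-m) := by
    intro m hm
    rw [Finset.mem_Icc] at hm
    have h1 : ∀ i ∈ Finset.Icc m n,
        (n.choose i : ℤ) * ((i.choose m : ℤ) * ((m:ℤ)+1)^(m-1) * ((t:ℤ) - m - 1)^(i-m))
        = ((n.choose m : ℤ) * ((m:ℤ)+1)^(m-1))
            * (((n-m).choose (i-m) : ℤ) * ((t:ℤ) - m - 1)^(i-m)) := by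
      intro i hi
      rw [Finset.mem_Icc] at hi
      have hc : (n.choose i) * (i.choose m) = (n.choose m) * ((n-m).choose (i-m)) :=
        Nat.choose_mul hi.1
      have hc2 : ((n.choose i : ℤ)) * (i.choose m : ℤ)
          = ((n.choose m : ℤ)) * ((n-m).choose (i-m) : ℤ) := by
        exact_mod_cast congrArg (Nat.cast : ℕ → ℤ) hc
      calc (n.choose i : ℤ) * ((i.choose m : ℤ) * ((m:ℤ)+1)^(m-1) * ((t:ℤ) - m - 1)^(i-m))
          = ((n.choose i : ℤ) * (i.choose m : ℤ))
              * (((m:ℤ)+1)^(m-1) * ((t:ℤ) - m - 1)^(i-m)) := by ring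
        _ = ((n.choose m : ℤ) * ((n-m).choose (i-m) : ℤ))
              * (((m:ℤ)+1)^(m-1) * ((t:ℤ) - m - 1)^(i-m)) := by rw [hc2]
        _ = _ := by ring
    rw [Finset.sum_congr rfl h1, ← Finset.mul_sum]
    have h2 : ∑ i ∈ Finset.Icc m n, (((n-m).choose (i-m) : ℤ) * ((t:ℤ) - m - 1)^(i-m))
        = ((t:ℤ) - m)^(n-m) := by
      rw [← Finset.Ico_add_one_right_eq_Icc, Finset.sum_Ico_eq_sum_range]
      have h3 : n + 1 - m = (n - m) + 1 := by omega
      rw [h3]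
      have h4 : ∀ k ∈ Finset.range ((n-m)+1),
          (((n-m).choose ((m+k)-m) : ℤ) * ((t:ℤ) - m - 1)^((m+k)-m))
          = ((t:ℤ) - m - 1)^k * 1^((n-m)-k) * ((n-m).choose k) := by
        intro k _
        have h5 : (m+k) - m = k := by omega
        rw [h5]
        ring
      rw [Finset.sum_congr rfl h4, ← add_pow]
      congr 1
      ring
    rw [h2]
  rw [Finset.sum_congr rfl step2]
  rw [Finset.Icc_eq_cons_Ioc (by omega : t ≤ n), Finset.sum_cons]
  have hz : ((n.choose t : ℤ) * ((t:ℤ)+1)^(t-1) * ((t:ℤ) - t)^(n-t)) = 0 := by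
    rw [show ((t:ℤ) - (t:ℤ)) = 0 by ring, zero_pow (by omega : n - t ≠ 0), mul_zero]
  rw [hz, zero_add, ← Finset.Icc_add_one_left_eq_Ioc, Hf]
  apply Finset.sum_congr rfl
  intro m hm
  have hc : ((t:ℤ) - m) = (((t+1:ℕ)):ℤ) - m - 1 := by push_cast; ring
  rw [hc]

lemma Hf_one (n : ℕ) (hn : 1 ≤ n) : Hf n 1 = 1 := by
  have h := Hf_conv 0 n hn
  rw [Finset.Icc_eq_cons_Ioc (Nat.zero_le n), Finset.sum_cons] at h
  have h00 : Hf 0 0 = 1 := by simp [Hf]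
  have hz : ∑ i ∈ Finset.Ioc 0 n, (n.choose i : ℤ) * Hf i 0 = 0 :=
    Finset.sum_eq_zero fun i hi => by
      rw [Hf_zero i (Finset.mem_Ioc.mp hi).1, mul_zero]
  rw [hz, h00] at h
  simpa using h.symm

lemma main_count : ∀ s : ℕ, 1 ≤ s → ∀ n : ℕ, s ≤ n → ((rpf n s).card : ℤ) = Hf n s := by
  intro s hs
  induction s, hs using Nat.le_induction with
  | base =>
    intro n hn
    rw [rpf_one n hn, Hf_one n hn]
    norm_num
  | succ s hs ih =>
    intro n hn
    rw [rpf_rec n s hs hn]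
    push_cast
    rw [Finset.sum_congr rfl (fun i hi => by
      rw [ih i (Finset.mem_Icc.mp hi).1] :
      ∀ i ∈ Finset.Icc s n, ((n.choose i : ℤ)) * ((rpf i s).card : ℤ)
        = ((n.choose i : ℤ)) * Hf i s)]
    exact Hf_conv s n hn

theorem count_restricted_pf_sum (n s : ℕ) (h1 : 1 ≤ s) (h2 : s ≤ n) :
    ({π : Fin n → ℕ | IsRPF n s π}.ncard : ℤ) =
      ∑ i ∈ Finset.Icc s n,
        (n.choose i : ℤ) * ((i : ℤ) + 1) ^ (i - 1) * ((s : ℤ) - i - 1) ^ (n - i) := by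
  have hset : {π : Fin n → ℕ | IsRPF n s π} = ↑(rpf n s) := by
    ext π
    simp only [Set.mem_setOf_eq, Finset.mem_coe, mem_rpf]
  rw [hset, Set.ncard_coe_finset]
  exact main_count s h1 n h2
end

section
/- For each positive integer n, Σ_{π ∈ PF_n} x^{#π⁻¹({1})} = x·(x+n)^{n−1} as polynomials in x, where PF_n is the set of parking functions on n cars. -/
open Finset

section Cycle
variable (T : ℕ → ℤ) (q m : ℕ)

lemma Tlow (hm : 0 < m) (h0 : T 0 = 0) (hper : ∀ k, T (k + q) = T k - m) (i : ℕ) :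
    ∃ k, T k ≤ -(i : ℤ) := by
  refine ⟨i * q, ?_⟩
  have : ∀ j : ℕ, T (j * q) = -(j : ℤ) * m := by
    intro j
    induction j with
    | zero => simpa using h0
    | succ j ih =>
      have : (j + 1) * q = j * q + q := by ring
      rw [this, hper, ih]
      push_cast; ring
  rw [this i]
  have : (i : ℤ) ≤ (i : ℤ) * m := le_mul_of_one_le_right (by positivity) (by exact_mod_cast hm)
  linarith

variable (hm : 0 < m) (hq : m < q) (h0 : T 0 = 0)
  (hstep : ∀ k, T k ≤ T (k + 1) + 1) (hper : ∀ k, T (k + q) = T k - m)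

noncomputable def tau (i : ℕ) : ℕ := Nat.find (Tlow T q m hm h0 hper i)

lemma tau_spec (i : ℕ) : T (tau T q m hm h0 hper i) ≤ -(i : ℤ) :=
  Nat.find_spec (Tlow T q m hm h0 hper i)

lemma tau_min {i s : ℕ} (hs : s < tau T q m hm h0 hper i) : -(i : ℤ) < T s := by
  have := Nat.find_min (Tlow T q m hm h0 hper i) hs
  omega

include hstep in
lemma tau_val (i : ℕ) : T (tau T q m hm h0 hper i) = -(i : ℤ) := by
  set a := tau T q m hm h0 hper i with ha
  have h1 : T a ≤ -(i:ℤ) := tau_spec T q m hm h0 hper i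
  rcases Nat.eq_zero_or_pos a with h | h
  · rw [h] at h1 ⊢; rw [h0] at h1 ⊢; omega
  · obtain ⟨s, hs⟩ : ∃ s, a = s + 1 := ⟨a - 1, by omega⟩
    have h2 : -(i:ℤ) < T s := tau_min T q m hm h0 hper (by omega)
    have := hstep s
    rw [hs] at h1 ⊢
    omega

lemma tau_mono {i i' : ℕ} (h : i ≤ i') :
    tau T q m hm h0 hper i ≤ tau T q m hm h0 hper i' := by
  apply Nat.find_min'
  have := tau_spec T q m hm h0 hper i'
  have : T (tau T q m hm h0 hper i') ≤ -(i:ℤ) := by omega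
  exact this

include hstep in
lemma tau_strictmono {i i' : ℕ} (h : i < i') :
    tau T q m hm h0 hper i < tau T q m hm h0 hper i' := by
  have h1 := tau_mono T q m hm h0 hper (le_of_lt h)
  rcases lt_or_eq_of_le h1 with h2 | h2
  · exact h2
  · exfalso
    have e1 := tau_val T q m hm h0 hstep hper i
    have e2 := tau_val T q m hm h0 hstep hper i'
    rw [h2] at e1
    rw [e1] at e2
    omega

include hstep h0 in
lemma tau_ge (i : ℕ) : i ≤ tau T q m hm h0 hper i := by
  have hk : ∀ k : ℕ, -(k : ℤ) ≤ T k := by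
    intro k
    induction k with
    | zero => simp [h0]
    | succ k ih => have := hstep k; push_cast; push_cast at ih; omega
  have h1 := tau_spec T q m hm h0 hper i
  have := hk (tau T q m hm h0 hper i)
  have : (i : ℤ) ≤ (tau T q m hm h0 hper i : ℤ) := by omega
  exact_mod_cast this

include hm hq h0 hstep hper in
open Classical in
theorem cycle_count :
    ((range q).filter (fun a => ∀ t ∈ Icc 1 (q-1), T a - m < T (a + t))).card = m := by
  classical
  set τ : ℕ → ℕ := tau T q m hm h0 hper with hτ
  have hτval : ∀ i, T (τ i) = -(i:ℤ) := tau_val T q m hm h0 hstep hper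
  have hτmin : ∀ {i s : ℕ}, s < τ i → -(i:ℤ) < T s := fun h => tau_min T q m hm h0 hper h
  have hτge : ∀ i, i ≤ τ i := tau_ge T q m hm h0 hstep hper
  have hτsm : ∀ {i i'}, i < i' → τ i < τ i' := fun h => tau_strictmono T q m hm h0 hstep hper h
  have hτmono : ∀ {i i'}, i ≤ i' → τ i ≤ τ i' := fun h => tau_mono T q m hm h0 hper h
  set K : ℕ := Nat.findGreatest (fun i => τ i < q) q with hK
  have hτ0 : τ 0 = 0 := by
    have : τ 0 ≤ 0 := Nat.find_min' _ (by simp [h0])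
    omega
  have hPK : τ K < q := Nat.findGreatest_spec (P := fun i => τ i < q) (m := 0) (Nat.zero_le q) (by show τ 0 < q; rw [hτ0]; omega)
  have hKiff : ∀ i, τ i < q ↔ i ≤ K := by
    intro i
    constructor
    · intro hi
      by_contra hc
      push_neg at hc
      rcases le_or_gt i q with hiq | hiq
      · exact Nat.findGreatest_is_greatest hc hiq hi
      · have := hτge i; omega
    · intro hi
      rcases eq_or_lt_of_le hi with rfl | hi
      · exact hPK
      · exact lt_trans (hτsm hi) hPK
  have hKm : m - 1 ≤ K := by
    rw [← hKiff]
    have hm1 : τ (m-1) ≤ q - 1 := by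
      apply Nat.find_min'
      have h1 := hstep (q-1)
      have h2 := hper 0
      rw [Nat.zero_add, h0] at h2
      have hq1 : q - 1 + 1 = q := by omega
      rw [hq1] at h1
      rw [h2] at h1
      have h3 : T (q-1) ≤ -((m:ℤ) - 1) := by omega
      omega
    omega
  -- characterization
  have claim : ∀ a < q, ((∀ t ∈ Icc 1 (q-1), T a - m < T (a + t)) ↔
      ∃ i, a = τ i ∧ q ≤ τ (i + m)) := by
    intro a ha
    constructor
    · intro hg
      have hTa : T a ≤ 0 := by
        rcases Nat.eq_zero_or_pos a with rfl | hapos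
        · omega
        · have := hg (q - a) (by simp; omega)
          have heq : a + (q - a) = 0 + q := by omega
          rw [heq, hper, h0] at this
          omega
      set i : ℕ := (-T a).toNat with hi
      have hTai : T a = -(i:ℤ) := by simp [hi]; omega
      have hfirst : ∀ s < a, -(i:ℤ) < T s := by
        intro s hs
        have h1 := hg (s + q - a) (by simp; omega)
        have heq : a + (s + q - a) = s + q := by omega
        rw [heq, hper] at h1
        omega
      have hτi : τ i = a := by
        have h1 : τ i ≤ a := Nat.find_min' _ (le_of_eq hTai)
        rcases lt_or_eq_of_le h1 with h2 | h2
        · exact absurd (hτval i) (by have := hfirst _ h2; omega)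
        · exact h2
      refine ⟨i, hτi.symm, ?_⟩
      by_contra hc
      push_neg at hc
      have h1 := hτval (i + m)
      rcases lt_or_ge (τ (i+m)) a with h2 | h2
      · have := hfirst _ h2; push_cast at h1; omega
      · rcases eq_or_lt_of_le h2 with h2 | h2
        · rw [h2] at hTai; rw [h1] at hTai; push_cast at hTai; omega
        · have h3 := hg (τ (i+m) - a) (by simp; omega)
          have heq : a + (τ (i+m) - a) = τ (i+m) := by omega
          rw [heq, h1, hTai] at h3
          push_cast at h3; omega
    · rintro ⟨i, rfl, hqi⟩
      intro t ht
      simp only [mem_Icc] at ht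
      rw [hτval i]
      rcases lt_or_ge (τ i + t) q with h1 | h1
      · have : τ i + t < τ (i + m) := lt_of_lt_of_le h1 hqi
        have := hτmin this
        push_cast; omega
      · have heq : τ i + t = (τ i + t - q) + q := by omega
        rw [heq, hper]
        have hlt : τ i + t - q < τ i := by omega
        have := hτmin (i := i) hlt
        push_cast; omega
  -- finset equality
  have hset : ((range q).filter (fun a => ∀ t ∈ Icc 1 (q-1), T a - m < T (a + t)))
      = (Icc (K + 1 - m) K).image τ := by
    ext a
    simp only [mem_filter, mem_range, mem_image, mem_Icc]
    rw [show (∀ t, 1 ≤ t ∧ t ≤ q - 1 → T a - ↑m < T (a + t)) ↔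
        (∀ t ∈ Icc 1 (q-1), T a - ↑m < T (a + t)) from by simp [mem_Icc]]
    constructor
    · rintro ⟨ha, hg⟩
      obtain ⟨i, rfl, hi⟩ := (claim a ha).1 hg
      refine ⟨i, ⟨?_, (hKiff i).1 ha⟩, rfl⟩
      have : ¬ (i + m ≤ K) := by rw [← hKiff]; omega
      omega
    · rintro ⟨i, ⟨hi1, hi2⟩, rfl⟩
      have ha : τ i < q := (hKiff i).2 hi2
      refine ⟨ha, (claim _ ha).2 ⟨i, rfl, ?_⟩⟩
      have : ¬ (τ (i + m) < q) := by rw [hKiff]; omega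
      omega
  rw [hset, Finset.card_image_of_injOn (fun x _ y _ h => ?_), Nat.card_Icc]
  · omega
  · by_contra hc
    rcases Nat.lt_or_ge x y with h1 | h1
    · exact absurd h (Nat.ne_of_lt (hτsm h1))
    · have : y < x := by omega
      exact absurd h.symm (Nat.ne_of_lt (hτsm this))
end Cycle

section App
variable {n m : ℕ}

def cnt (g : Fin n → ZMod (n+m)) (u : ℕ) : ℕ :=
  (univ.filter fun j => g j = (u : ZMod (n+m))).card

lemma win (hn : 0 < n) (hm : 0 < m) (g : Fin n → ZMod (n+m)) (k : ℕ) :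
    ∑ u ∈ range (n+m), cnt g (k+u) = n := by
  have : NeZero (n+m) := ⟨by omega⟩
  have h1 : (univ : Finset (Fin n)).card
      = ∑ s : ZMod (n+m), (univ.filter fun j => g j = s).card :=
    card_eq_sum_card_fiberwise (f := g) (fun x _ => mem_univ _)
  rw [card_univ, Fintype.card_fin] at h1
  refine Eq.trans ?_ h1.symm
  apply Finset.sum_nbij' (i := fun u => ((k + u : ℕ) : ZMod (n+m)))
    (j := fun s => (s - (k : ZMod (n+m))).val)
  · intro u _; exact mem_univ _
  · intro s _; simp only [mem_range]; exact ZMod.val_lt _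
  · intro u hu
    simp only [mem_range] at hu
    push_cast
    ring_nf
    rw [ZMod.val_cast_of_lt hu]  -- might not be the shape; fix later
  · intro s _
    push_cast
    rw [ZMod.natCast_val, ZMod.cast_id]
    ring
  · intro u _
    rfl
end App

section App2
variable {n m : ℕ}

def Tf (g : Fin n → ZMod (n+m)) (k : ℕ) : ℤ :=
  (∑ u ∈ range k, (cnt g u : ℤ)) - k

lemma Tf_zero (g : Fin n → ZMod (n+m)) : Tf g 0 = 0 := by simp [Tf]

lemma Tf_step (g : Fin n → ZMod (n+m)) (k : ℕ) : Tf g k ≤ Tf g (k+1) + 1 := by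
  simp only [Tf, Finset.sum_range_succ]
  push_cast
  have : (0:ℤ) ≤ (cnt g k : ℤ) := Int.natCast_nonneg _
  omega

lemma Tf_per (hn : 0 < n) (hm : 0 < m) (g : Fin n → ZMod (n+m)) (k : ℕ) :
    Tf g (k + (n+m)) = Tf g k - m := by
  simp only [Tf]
  rw [Finset.sum_range_add (fun u => (cnt g u : ℤ)) k (n+m)]
  have : ∑ u ∈ range (n+m), (cnt g (k+u) : ℤ) = (n : ℤ) := by
    rw [← Nat.cast_sum]
    exact_mod_cast congrArg (Nat.cast : ℕ → ℤ) (win hn hm g k)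
  rw [this]
  push_cast
  ring

lemma Tf_add (g : Fin n → ZMod (n+m)) (a t : ℕ) :
    Tf g (a + t) = Tf g a + (∑ u ∈ range t, (cnt g (a+u) : ℤ)) - t := by
  simp only [Tf]
  rw [Finset.sum_range_add (fun u => (cnt g u : ℤ)) a t]
  push_cast
  ring

-- card of values below t
lemma card_below (hn : 0 < n) (hm : 0 < m) (g : Fin n → ZMod (n+m)) (r : ZMod (n+m))
    (t : ℕ) (ht : t ≤ n + m) :
    (univ.filter fun j : Fin n => (g j + r).val < t).card
      = ∑ u ∈ range t, cnt g ((-r).val + u) := by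
  have : NeZero (n+m) := ⟨by omega⟩
  have h1 : (univ.filter fun j : Fin n => (g j + r).val < t).card
      = ∑ u ∈ range t, ((univ.filter fun j : Fin n => (g j + r).val < t).filter
          (fun j => (g j + r).val = u)).card := by
    apply card_eq_sum_card_fiberwise (f := fun j => (g j + r).val)
    intro j hj
    simp only [mem_coe, mem_filter, mem_univ, true_and] at hj
    simpa using hj
  rw [h1]
  apply Finset.sum_congr rfl
  intro u hu
  simp only [mem_range] at hu
  have hult : u < n + m := lt_of_lt_of_le hu ht
  congr 1
  ext j
  simp only [mem_filter, mem_univ, true_and, cnt]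
  constructor
  · rintro ⟨-, h2⟩
    have : g j + r = (u : ZMod (n+m)) := by
      have := ZMod.val_cast_of_lt hult
      apply ZMod.val_injective
      rw [h2, this]
    push_cast
    rw [ZMod.natCast_val, ZMod.cast_id]
    rw [← this]
    ring
  · intro h2
    push_cast at h2
    rw [ZMod.natCast_val, ZMod.cast_id] at h2
    have hg : g j + r = (u : ZMod (n+m)) := by rw [h2]; ring
    rw [hg, ZMod.val_cast_of_lt hult]
    exact ⟨hu, rfl⟩

end App2

section App3
variable {n m : ℕ}

def GoodF (m : ℕ) {n : ℕ} (g : Fin n → ZMod (n+m)) : Prop :=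
  ∀ t ∈ Icc 1 (n+m-1), t ≤ m - 1 + (univ.filter fun j => (g j).val < t).card

open Classical in
lemma shift_count (hn : 0 < n) (hm : 0 < m) [NeZero (n+m)] (g : Fin n → ZMod (n+m)) :
    (univ.filter fun r : ZMod (n+m) => GoodF m (fun j => g j + r)).card = m := by
  classical
  have key : ∀ r : ZMod (n+m), GoodF m (fun j => g j + r) ↔
      (∀ t ∈ Icc 1 (n+m-1), Tf g ((-r).val) - m < Tf g ((-r).val + t)) := by
    intro r
    unfold GoodF
    apply forall_congr'
    intro t
    apply imp_congr_right
    intro ht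
    simp only [mem_Icc] at ht
    rw [card_below hn hm g r t (by omega), Tf_add]
    constructor
    · intro h
      have h' : (t:ℤ) ≤ (m - 1 : ℕ) + (∑ u ∈ range t, (cnt g ((-r).val + u) : ℤ)) := by
        exact_mod_cast h
      omega
    · intro h
      have h' : (t:ℤ) ≤ ((m - 1 : ℕ) : ℤ) + (∑ u ∈ range t, (cnt g ((-r).val + u) : ℤ)) := by
        push_cast
        have : ((m:ℤ) - 1) = ((m-1 : ℕ) : ℤ) := by omega
        omega
      exact_mod_cast h'
  have hbij : (univ.filter fun r : ZMod (n+m) => GoodF m (fun j => g j + r)).card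
      = ((range (n+m)).filter
          (fun a => ∀ t ∈ Icc 1 (n+m-1), Tf g a - m < Tf g (a + t))).card := by
    apply Finset.card_nbij (i := fun r => (-r).val)
    · intro r hr
      simp only [mem_coe, mem_filter, mem_univ, true_and] at hr ⊢
      exact ⟨mem_range.mpr (ZMod.val_lt _), (key r).1 hr⟩
    · intro r hr r' hr' hh
      simp only at hh
      have : (-r) = (-r') := ZMod.val_injective _ hh
      simpa using neg_injective this
    · intro a ha
      simp only [Set.mem_image, coe_filter, mem_range, Set.mem_setOf_eq, mem_coe,
        mem_filter, mem_univ, true_and] at ha ⊢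
      obtain ⟨ha1, ha2⟩ := ha
      refine ⟨-(a : ZMod (n+m)), ?_, ?_⟩
      · rw [key]
        rw [neg_neg, ZMod.val_cast_of_lt ha1]
        exact ha2
      · rw [neg_neg, ZMod.val_cast_of_lt ha1]
  rw [hbij]
  have := cycle_count (Tf g) (n+m) m hm (by omega) (Tf_zero g) (Tf_step g) (Tf_per hn hm g)
  convert this using 2
end App3

section App4
variable {n m : ℕ}

open Classical in
lemma goodF_count (hn : 0 < n) (hm : 0 < m) [NeZero (n+m)] :
    (univ.filter fun g : Fin n → ZMod (n+m) => GoodF m g).card = m * (n+m)^(n-1) := by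
  classical
  set q := n + m with hq
  set B : Finset ((Fin n → ZMod q) × ZMod q) :=
    univ.filter (fun p => GoodF m (fun j => p.1 j + p.2)) with hB
  have h1 : B.card = (q:ℕ)^n * m := by
    have e1 : B.card = ∑ g : Fin n → ZMod q, (B.filter (fun p => p.1 = g)).card :=
      card_eq_sum_card_fiberwise (f := Prod.fst) (fun x _ => mem_univ _)
    have e2 : ∀ g : Fin n → ZMod q, (B.filter (fun p => p.1 = g)).card = m := by
      intro g
      rw [← shift_count hn hm g]
      apply Finset.card_nbij (i := Prod.snd)
      · rintro ⟨g', r⟩ hp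
        simp only [hB, mem_coe, mem_filter, mem_univ, true_and] at hp ⊢
        obtain ⟨h3, rfl⟩ := hp
        exact h3
      · rintro ⟨g1, r1⟩ h1 ⟨g2, r2⟩ h2 hh
        simp only [hB, coe_filter, Set.mem_setOf_eq, mem_filter] at h1 h2
        simp only at hh
        have hgg : g1 = g2 := h1.2.trans h2.2.symm
        simp [Prod.ext_iff, hgg, hh]
      · intro r hr
        simp only [coe_filter, mem_univ, true_and, Set.mem_setOf_eq] at hr
        refine ⟨(g, r), ?_, rfl⟩
        simp only [hB, coe_filter, mem_filter, mem_univ, true_and, Set.mem_setOf_eq]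
        exact ⟨hr, by trivial⟩
    rw [e1, Finset.sum_congr rfl (fun g _ => e2 g), Finset.sum_const, card_univ]
    simp [Fintype.card_fun, ZMod.card]
  have h2 : B.card = q * (univ.filter fun g : Fin n → ZMod q => GoodF m g).card := by
    have e1 : B.card = ∑ r : ZMod q, (B.filter (fun p => p.2 = r)).card :=
      card_eq_sum_card_fiberwise (f := Prod.snd) (fun x _ => mem_univ _)
    have e2 : ∀ r : ZMod q, (B.filter (fun p => p.2 = r)).card
        = (univ.filter fun g : Fin n → ZMod q => GoodF m g).card := by
      intro r
      apply Finset.card_nbij (i := fun p => fun j => p.1 j + r)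
      · rintro ⟨g', r'⟩ hp
        simp only [hB, mem_coe, mem_filter, mem_univ, true_and] at hp ⊢
        obtain ⟨h3, rfl⟩ := hp
        exact h3
      · rintro ⟨g1, r1⟩ h1 ⟨g2, r2⟩ h2 hh
        simp only [hB, coe_filter, Set.mem_setOf_eq, mem_filter] at h1 h2
        have hgg : g1 = g2 := by
          funext j
          have := congrFun hh j
          simp only at this
          exact add_right_cancel this
        have hrr : r1 = r2 := h1.2.trans h2.2.symm
        simp [Prod.ext_iff, hgg, hrr]
      · intro h hh
        simp only [coe_filter, mem_univ, true_and, Set.mem_setOf_eq] at hh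
        have e : (fun j => h j - r + r) = h := by funext j; simp
        refine ⟨((fun j => h j - r), r), ?_, by funext j; simp⟩
        simp only [hB, coe_filter, mem_filter, mem_univ, true_and, Set.mem_setOf_eq]
        refine ⟨?_, by trivial⟩
        show GoodF m fun j => h j - r + r
        rw [e]
        exact hh
    rw [e1, Finset.sum_congr rfl (fun r _ => e2 r), Finset.sum_const, card_univ]
    simp [ZMod.card, mul_comm]
  have hqpos : 0 < q := by omega
  have hpow : (q:ℕ)^n = q * q^(n-1) := by
    conv_lhs => rw [show n = 1 + (n-1) by omega]
    rw [pow_add, pow_one]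
  apply Nat.eq_of_mul_eq_mul_left hqpos
  rw [← h2, h1, hpow]
  ring
end App4

section App5
variable {n m : ℕ}

def PFcond {n : ℕ} (π : Fin n → Fin n) : Prop :=
  ∀ i ∈ Icc 1 n, i ≤ (univ.filter fun j => (π j).val + 1 ≤ i).card

def Phi (hn : 0 < n) (m : ℕ) (g : Fin n → ZMod (n+m)) : Fin n → Fin n :=
  fun j => if (g j).val < m then ⟨0, hn⟩ else ⟨((g j).val - m + 1) % n, Nat.mod_lt _ hn⟩

lemma good_small (hn : 0 < n) (hm : 0 < m) [NeZero (n+m)] (g : Fin n → ZMod (n+m))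
    (hg : GoodF m g) (j : Fin n) : (g j).val < n + m - 1 := by
  have h1 := hg (n+m-1) (by simp [mem_Icc]; omega)
  set s := univ.filter fun j : Fin n => (g j).val < n + m - 1 with hs
  have h2 : s.card ≤ n := by
    calc s.card ≤ (univ : Finset (Fin n)).card := card_le_card (filter_subset _ _)
    _ = n := by simp
  have h3 : s = univ := by
    apply Finset.eq_univ_of_card
    simp only [card_univ, Fintype.card_fin]
    omega
  have := Finset.mem_univ j
  rw [← h3, hs, mem_filter] at this
  exact this.2

lemma good_pf (hn : 0 < n) (hm : 0 < m) [NeZero (n+m)] (g : Fin n → ZMod (n+m))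
    (hg : GoodF m g) : PFcond (Phi hn m g) := by
  intro i hi
  simp only [mem_Icc] at hi
  have h1 := hg (i + m - 1) (by simp [mem_Icc]; omega)
  have hsub : (univ.filter fun j : Fin n => (g j).val < i + m - 1)
      ⊆ (univ.filter fun j : Fin n => ((Phi hn m g) j).val + 1 ≤ i) := by
    intro j hj
    simp only [mem_filter, mem_univ, true_and] at hj ⊢
    unfold Phi
    by_cases hc : (g j).val < m
    · simp [hc]; omega
    · simp only [hc, if_false]
      have := Nat.mod_le ((g j).val - m + 1) n
      have h4 : ((g j).val - m + 1) % n ≤ (g j).val - m + 1 := Nat.mod_le _ _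
      omega
  have := card_le_card hsub
  omega

def Afam (m : ℕ) {n : ℕ} (π : Fin n → Fin n) : Fin n → Finset (ZMod (n+m)) :=
  fun j => if (π j).val = 0 then (range m).image (Nat.cast)
           else {(((π j).val + m - 1 : ℕ) : ZMod (n+m))}

lemma Afam_card (hn : 0 < n) (hm : 0 < m) [NeZero (n+m)] (π : Fin n → Fin n) (j : Fin n) :
    (Afam m π j).card = if (π j).val = 0 then m else 1 := by
  unfold Afam
  by_cases hc : (π j).val = 0
  · simp only [hc, if_true]
    rw [Finset.card_image_of_injOn, card_range]
    intro u hu v hv huv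
    simp only [coe_range, Set.mem_Iio] at hu hv
    have h1 : ((u : ZMod (n+m))).val = u := ZMod.val_cast_of_lt (by omega)
    have h2 : ((v : ZMod (n+m))).val = v := ZMod.val_cast_of_lt (by omega)
    rw [← h1, ← h2, huv]
  · simp [hc]

open Classical in
lemma fiber_eq (hn : 0 < n) (hm : 0 < m) [NeZero (n+m)] (π : Fin n → Fin n)
    (hπ : PFcond π) :
    ((univ.filter fun g : Fin n → ZMod (n+m) => GoodF m g).filter
        (fun g => Phi hn m g = π)) = Fintype.piFinset (Afam m π) := by
  ext g
  simp only [mem_filter, mem_univ, true_and, Fintype.mem_piFinset]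
  constructor
  · rintro ⟨hg, hphi⟩
    intro j
    have hsmall := good_small hn hm g hg j
    have hvg : ((((g j).val : ℕ)) : ZMod (n+m)) = g j := by
      rw [ZMod.natCast_val, ZMod.cast_id]
    unfold Afam
    by_cases hc : (π j).val = 0
    · simp only [hc, if_true, mem_image, mem_range]
      have hlt : (g j).val < m := by
        by_contra hge
        push_neg at hge
        have : (Phi hn m g) j = π j := congrFun hphi j
        unfold Phi at this
        rw [if_neg (by omega : ¬ (g j).val < m)] at this
        have hmod : ((g j).val - m + 1) % n = (g j).val - m + 1 :=
          Nat.mod_eq_of_lt (by omega)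
        have : ((g j).val - m + 1) % n = (π j).val := congrArg Fin.val this
        omega
      exact ⟨(g j).val, hlt, hvg⟩
    · simp only [hc, if_false, mem_singleton]
      have hΦ : (Phi hn m g) j = π j := congrFun hphi j
      unfold Phi at hΦ
      have hge : ¬ (g j).val < m := by
        intro hlt
        simp only [hlt, if_true] at hΦ
        have : (0:ℕ) = (π j).val := congrArg Fin.val hΦ
        omega
      simp only [hge, if_false] at hΦ
      have hval : ((g j).val - m + 1) % n = (π j).val := congrArg Fin.val hΦ
      have hmod : ((g j).val - m + 1) % n = (g j).val - m + 1 :=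
        Nat.mod_eq_of_lt (by omega)
      have : (g j).val = (π j).val + m - 1 := by omega
      rw [← hvg, this]
  · intro hA
    have hval : ∀ j, (g j).val = if (π j).val = 0 then (g j).val else (π j).val + m - 1 := by
      intro j
      have := hA j
      unfold Afam at this
      by_cases hc : (π j).val = 0
      · simp [hc]
      · simp only [hc, if_false, mem_singleton] at this ⊢
        rw [this]
        exact ZMod.val_cast_of_lt (by have := (π j).isLt; omega)
    have hvlt : ∀ j, (π j).val = 0 → (g j).val < m := by
      intro j hc
      have := hA j
      unfold Afam at this
      simp only [hc, if_true, mem_image, mem_range] at this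
      obtain ⟨u, hu, hgu⟩ := this
      rw [← hgu, ZMod.val_cast_of_lt (by omega)]
      exact hu
    constructor
    · -- GoodF
      intro t ht
      simp only [mem_Icc] at ht
      by_cases hcase : t ≤ m - 1
      · omega
      · have htm : m ≤ t := by omega
        set i := t - m + 1 with hi
        have hii : i ∈ Icc 1 n := by simp [mem_Icc]; omega
        have hpf := hπ i hii
        have hsub : (univ.filter fun j : Fin n => (π j).val + 1 ≤ i)
            ⊆ (univ.filter fun j : Fin n => (g j).val < t) := by
          intro j hj
          simp only [mem_filter, mem_univ, true_and] at hj ⊢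
          by_cases hc : (π j).val = 0
          · have := hvlt j hc; omega
          · have := hval j
            simp only [hc, if_false] at this
            omega
        have := card_le_card hsub
        omega
    · -- Phi g = π
      funext j
      unfold Phi
      by_cases hc : (π j).val = 0
      · have := hvlt j hc
        simp only [this, if_true]
        exact Fin.ext (by simp [hc])
      · have hv := hval j
        simp only [hc, if_false] at hv
        have hge : ¬ (g j).val < m := by omega
        simp only [hge, if_false]
        apply Fin.ext
        simp only []
        rw [hv]
        have h2 : (π j).val + m - 1 - m + 1 = (π j).val := by omega
        rw [h2]
        exact Nat.mod_eq_of_lt (π j).isLt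

end App5

section App6
variable {n m : ℕ}

open Classical in
lemma pf_sum (hn : 0 < n) (hm : 0 < m) [NeZero (n+m)] :
    ∑ π ∈ univ.filter (fun π : Fin n → Fin n => PFcond π),
      m ^ (univ.filter fun j => (π j).val + 1 = 1).card = m * (n+m)^(n-1) := by
  classical
  rw [← goodF_count hn hm (n := n) (m := m)]
  have h1 : (univ.filter fun g : Fin n → ZMod (n+m) => GoodF m g).card
      = ∑ π ∈ univ.filter (fun π : Fin n → Fin n => PFcond π),
          ((univ.filter fun g : Fin n → ZMod (n+m) => GoodF m g).filter
            (fun g => Phi hn m g = π)).card := by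
    apply card_eq_sum_card_fiberwise (f := Phi hn m)
    intro g hg
    simp only [mem_coe, mem_filter, mem_univ, true_and] at hg ⊢
    exact good_pf hn hm g hg
  rw [h1]
  apply Finset.sum_congr rfl
  intro π hπ
  simp only [mem_filter, mem_univ, true_and] at hπ
  rw [fiber_eq hn hm π hπ, Fintype.card_piFinset]
  have h2 : ∀ j, (Afam m π j).card = if (π j).val = 0 then m else 1 :=
    Afam_card hn hm π
  rw [Finset.prod_congr rfl (fun j _ => h2 j), Finset.prod_ite, Finset.prod_const,
    Finset.prod_const_one, mul_one]
  congr 1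
  apply congrArg
  apply Finset.filter_congr
  intro j _
  constructor
  · intro h; omega
  · intro h; omega
end App6

open Polynomial in
open Classical in
theorem ones_enumerator (n : ℕ) (hn : 0 < n) :
    ∑ π ∈ Finset.univ.filter
        (fun π : Fin n → Fin n =>
          ∀ i ∈ Finset.Icc 1 n,
            i ≤ (Finset.univ.filter (fun j => (π j).val + 1 ≤ i)).card),
      (X : Polynomial ℤ) ^ (Finset.univ.filter (fun j => (π j).val + 1 = 1)).card
    = X * (X + C (n : ℤ)) ^ (n - 1) := by
  classical
  have hfs : (Finset.univ.filter
        (fun π : Fin n → Fin n =>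
          ∀ i ∈ Finset.Icc 1 n,
            i ≤ (Finset.univ.filter (fun j => (π j).val + 1 ≤ i)).card))
      = Finset.univ.filter (fun π : Fin n → Fin n => PFcond π) := by
    ext π
    simp only [mem_filter, mem_univ, true_and, PFcond]; exact ((@mem_filter (Fin n → Fin n) (fun π => PFcond π) (fun _ => Classical.propDecidable _) univ π).trans (and_iff_right (mem_univ π))).symm
  rw [hfs]
  apply Polynomial.eq_of_infinite_eval_eq
  apply Set.Infinite.mono (s := Set.range (fun k : ℕ => ((k:ℤ)+1)))
  · rintro x ⟨k, rfl⟩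
    simp only [Set.mem_setOf_eq]
    have : NeZero (n + (k+1)) := ⟨by omega⟩
    have key := pf_sum (n := n) (m := k+1) hn (by omega)
    have keyZ : ∑ π ∈ univ.filter (fun π : Fin n → Fin n => PFcond π),
        ((k:ℤ)+1) ^ (univ.filter fun j => (π j).val + 1 = 1).card
        = ((k:ℤ)+1) * (((k:ℤ)+1) + n)^(n-1) := by
      rw [show ((k:ℤ)+1) * (((k:ℤ)+1) + n)^(n-1) = (((k+1) * (n+(k+1))^(n-1) : ℕ) : ℤ) from by
        push_cast; ring, ← key, Nat.cast_sum]
      apply Finset.sum_congr rfl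
      intro π _
      rw [Nat.cast_pow]
      push_cast
      ring
    rw [Polynomial.eval_finset_sum, Polynomial.eval_mul, Polynomial.eval_pow,
      Polynomial.eval_add, Polynomial.eval_X, Polynomial.eval_C]
    simp only [Polynomial.eval_pow, Polynomial.eval_X]
    rw [keyZ]
  · apply Set.infinite_range_of_injective
    intro a b hab
    simpa using hab
end
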